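/- The family of languages generated by graph-controlled insertion-deletion systems with at most 4 components, with insertion rules of size at most (1,1,0) and deletion rules of size at most (1,0,1), equals the family of recursively enumerable languages; that is, GCL_4(ins_1^{1,0}, del_1^{0,1}) = RE. -/

import Mathlib

/-! ### Insertion-deletion rules -/

/-- An insertion rule `(u, α, v)_ins` or a deletion rule `(u, α, v)_del`
over the alphabet `V`. -/
inductive InsDelRule (V : Type) : Type
  | ins (u α v : List V)
  | del (u α v : List V)

namespace InsDelRule

variable {V : Type}

/-- The inserted/deleted string `α` of a rule. -/
def mid : InsDelRule V → List V
  | ins _ α _ => α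
  | del _ α _ => α

/-- `r.Applies w w'` holds if applying the insertion/deletion rule `r`
rewrites the string `w` into the string `w'`:  an insertion rule `(u,α,v)`
rewrites `x ++ u ++ v ++ y` into `x ++ u ++ α ++ v ++ y`, and a deletion rule
`(u,α,v)` rewrites `x ++ u ++ α ++ v ++ y` into `x ++ u ++ v ++ y`. -/
def Applies : InsDelRule V → List V → List V → Prop
  | ins u α v, w, w' => ∃ x y, w = x ++ u ++ v ++ y ∧ w' = x ++ u ++ α ++ v ++ y
  | del u α v, w, w' => ∃ x y, w = x ++ u ++ α ++ v ++ y ∧ w' = x ++ u ++ v ++ y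

/-- The rule has size at most `(n,m,m')` if it is an insertion rule, and
size at most `(p,q,q')` if it is a deletion rule. -/
def SizeLE (r : InsDelRule V) (n m m' p q q' : ℕ) : Prop :=
  match r with
  | ins u α v => α.length ≤ n ∧ u.length ≤ m ∧ v.length ≤ m'
  | del u α v => α.length ≤ p ∧ u.length ≤ q ∧ v.length ≤ q'

end InsDelRule

/-! ### Graph-controlled insertion-deletion systems with k components -/

/-- A graph-controlled insertion-deletion system with `k` components,
over the (finite) alphabet `V`, with terminal alphabet `T` (injectively
embedded into `V`).  The rules in `R` are of the form `(i, r, j)` meaning: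
in component `i`, the insertion/deletion rule `r` may be applied, after which
the string moves to component `j`.  Labels are given implicitly by the
positions in the list `R`. -/
structure GCID (V T : Type) : Type where
  /-- the number of components -/
  k : ℕ
  hV : Finite V
  /-- the embedding of the terminal alphabet into the alphabet -/
  emb : T → V
  embInj : Function.Injective emb
  /-- the finite set of axioms -/
  axioms : List (List V)
  /-- the initial component -/
  i0 : Fin k
  /-- the final component -/
  ifin : Fin k
  /-- the finite set of rules -/
  R : List (Fin k × InsDelRule V × Fin k)
  /-- the inserted/deleted string of every rule is nonempty -/
  mid_ne : ∀ r ∈ R, (r.2.1).mid ≠ []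

namespace GCID

variable {V T : Type}

/-- One transition `(i, w) ⇒ (j, w')`:  some rule `(i, r, j)` of the system
rewrites `w` into `w'`. -/
def Tr (M : GCID V T) : Fin M.k × List V → Fin M.k × List V → Prop :=
  fun c c' => ∃ r ∈ M.R, r.1 = c.1 ∧ r.2.2 = c'.1 ∧ (r.2.1).Applies c.2 c'.2

/-- The language generated by the system: all terminal strings reachable in
the final component from some axiom in the initial component. -/
def lang (M : GCID V T) : Set (List T) :=
  {w | ∃ w' ∈ M.axioms,
    Relation.ReflTransGen M.Tr (M.i0, w') (M.ifin, w.map M.emb)}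

/-- The system has insertion rules of size at most `(n,m,m')` and deletion
rules of size at most `(p,q,q')`. -/
def SizeLE (M : GCID V T) (n m m' p q q' : ℕ) : Prop :=
  ∀ r ∈ M.R, (r.2.1).SizeLE n m m' p q q'

/-- There is an edge from component `i` to component `j` in the communication
graph, i.e. some rule `(i, r, j)` is in `R`. -/
def DirEdge (M : GCID V T) (i j : Fin M.k) : Prop :=
  ∃ r ∈ M.R, r.1 = i ∧ r.2.2 = j

/-- The (undirected, loopless) communication graph of the system. -/
def commGraph (M : GCID V T) : SimpleGraph (Fin M.k) where
  Adj i j := i ≠ j ∧ (M.DirEdge i j ∨ M.DirEdge j i)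
  symm := ⟨fun _ _ h => ⟨h.1.symm, h.2.symm⟩⟩
  loopless := ⟨fun _ h => h.1 rfl⟩

/-- The list of insertion/deletion rules occurring in the system. -/
def ruleList (M : GCID V T) : List (InsDelRule V) := M.R.map (fun r => r.2.1)

end GCID

/-- The family `GCL_k(ins_n^{m,m'}, del_p^{q,q'})` of languages over `T`
generated by graph-controlled insertion-deletion systems with at most `k`
components, insertion rules of size at most `(n,m,m')`, and deletion rules
of size at most `(p,q,q')`. -/
def GCL (T : Type) (k n m m' p q q' : ℕ) : Set (Set (List T)) :=
  {L | ∃ (V : Type) (M : GCID V T),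
    M.k ≤ k ∧ M.SizeLE n m m' p q q' ∧ M.lang = L}

/-- The family `TCL_k(ins_n^{m,m'}, del_p^{q,q'})`:  as `GCL`, but the
communication graph must have a tree structure. -/
def TCL (T : Type) (k n m m' p q q' : ℕ) : Set (Set (List T)) :=
  {L | ∃ (V : Type) (M : GCID V T),
    M.k ≤ k ∧ M.SizeLE n m m' p q q' ∧ M.commGraph.IsTree ∧ M.lang = L}

/-! ### Label-based graph-controlled insertion-deletion systems -/

/-- A (label-based) graph-controlled insertion-deletion system over the
(finite) alphabet `V`, with terminal alphabet `T` (injectively embedded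
into `V`).  The labels are `Fin nLab`; the rule with label `l` is a pair
`(r, E)` of an insertion/deletion rule `r` and a set `E` of possible
successor labels. -/
structure LGCID (V T : Type) : Type where
  hV : Finite V
  /-- the embedding of the terminal alphabet into the alphabet -/
  emb : T → V
  embInj : Function.Injective emb
  /-- the finite set of axioms -/
  axioms : List (List V)
  /-- the number of labels -/
  nLab : ℕ
  /-- the rule `(r, E)` associated to each label -/
  rules : Fin nLab → InsDelRule V × Set (Fin nLab)
  /-- the set of initial labels -/
  I0 : Set (Fin nLab)
  /-- the set of final labels -/
  If : Set (Fin nLab)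
  /-- the inserted/deleted string of every rule is nonempty -/
  mid_ne : ∀ l, (rules l).1.mid ≠ []

namespace LGCID

variable {V T : Type}

/-- One transition `(i, w) ⇒ (j, w')`:  the rule labeled `i` is `(r, E)`,
`r` rewrites `w` into `w'`, and `j ∈ E`. -/
def Tr (M : LGCID V T) : Fin M.nLab × List V → Fin M.nLab × List V → Prop :=
  fun c c' => (M.rules c.1).1.Applies c.2 c'.2 ∧ c'.1 ∈ (M.rules c.1).2

/-- The language generated by the label-based system. -/
def lang (M : LGCID V T) : Set (List T) :=
  {w | ∃ w' ∈ M.axioms, ∃ i0 ∈ M.I0, ∃ i1 ∈ M.If,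
    Relation.ReflTransGen M.Tr (i0, w') (i1, w.map M.emb)}

/-- The list of insertion/deletion rules occurring in the system. -/
def ruleList (M : LGCID V T) : List (InsDelRule V) :=
  List.ofFn (fun l => (M.rules l).1)

end LGCID

/-! ### Type-0 grammars and recursively enumerable languages -/

/-- A type-0 (unrestricted) grammar over the terminal alphabet `T`. -/
structure Grammar (T : Type) : Type 1 where
  /-- the (finite) type of nonterminal symbols -/
  NT : Type
  hNT : Finite NT
  /-- the start symbol -/
  start : NT
  /-- the finite set of productions -/
  rules : List (List (NT ⊕ T) × List (NT ⊕ T))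
  /-- the left-hand side of every production contains a nonterminal -/
  lhs_nt : ∀ r ∈ rules, ∃ X : NT, Sum.inl X ∈ r.1

namespace Grammar

variable {T : Type}

/-- One derivation step of the grammar. -/
def Step (G : Grammar T) (u v : List (G.NT ⊕ T)) : Prop :=
  ∃ r ∈ G.rules, ∃ x y, u = x ++ r.1 ++ y ∧ v = x ++ r.2 ++ y

/-- The derivation relation (reflexive-transitive closure of `Step`). -/
def Derives (G : Grammar T) : List (G.NT ⊕ T) → List (G.NT ⊕ T) → Prop :=
  Relation.ReflTransGen G.Step

/-- The language generated by the grammar. -/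
def language (G : Grammar T) : Set (List T) :=
  {w | G.Derives [Sum.inl G.start] (w.map Sum.inr)}

end Grammar

/-- The family of recursively enumerable languages over `T`: the languages
generated by type-0 (unrestricted) grammars. -/
def RE (T : Type) : Set (Set (List T)) :=
  {L | ∃ G : Grammar T, G.language = L}

/-! ### Special Geffert normal form -/

/-- A type-0 grammar in special Geffert normal form over the terminal
alphabet `T`.  The nonterminals are `N' ∪ {A, B, C, D}`, where the four
special symbols `A, B, C, D` are encoded as `0, 1, 2, 3 : Fin 4`.
Besides the two erasing rules `AB → λ` and `CD → λ` and the rule `S' → λ`,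
the grammar has only context-free rules of the forms `X → bY` and `X → Yb`
with `X, Y ∈ N'` and `b ∈ T ∪ {A,B,C,D}`; such a rule is encoded as
`(X, b, Y, dir)` with `dir = true` for `X → bY` and `dir = false` for
`X → Yb`.  Moreover, except for the rules of the forms `X → Sb` and
`X → S'b`, right-hand sides are unique. -/
structure SGNF (T : Type) : Type 1 where
  /-- the nonterminals other than `A, B, C, D` -/
  N' : Type
  hN' : Finite N'
  /-- the start symbol -/
  S : N'
  /-- the symbol `S'` -/
  S' : N'
  /-- the context-free rules:  `(X, b, Y, true)` encodes `X → bY`,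
  `(X, b, Y, false)` encodes `X → Yb` -/
  cf : List (N' × (Fin 4 ⊕ T) × N' × Bool)
  /-- except for the rules of the forms `X → Sb` and `X → S'b`, any two rules
  with the same right-hand side have the same left-hand side -/
  rhs_unique : ∀ r ∈ cf, ∀ r' ∈ cf, r.2 = r'.2 →
    ¬(r.2.2.2 = false ∧ (r.2.2.1 = S ∨ r.2.2.1 = S')) → r.1 = r'.1

namespace SGNF

variable {T : Type}

/-- The symbols of the grammar: nonterminals `N' ⊕ Fin 4` plus terminals. -/
abbrev Sym (G : SGNF T) : Type := (G.N' ⊕ Fin 4) ⊕ T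

/-- The symbol corresponding to a nonterminal `X ∈ N'`. -/
def ntSym (G : SGNF T) (X : G.N') : G.Sym := Sum.inl (Sum.inl X)

/-- The symbols `A, B, C, D` (for `i = 0, 1, 2, 3`). -/
def abcd (G : SGNF T) (i : Fin 4) : G.Sym := Sum.inl (Sum.inr i)

/-- The symbol corresponding to `b ∈ {A,B,C,D} ∪ T`. -/
def toSym (G : SGNF T) : Fin 4 ⊕ T → G.Sym
  | Sum.inl i => Sum.inl (Sum.inr i)
  | Sum.inr t => Sum.inr t

/-- One derivation step of the grammar: application of a context-free rule
`X → bY` or `X → Yb`, or of one of the erasing rules `AB → λ`, `CD → λ`,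
`S' → λ`. -/
def Step (G : SGNF T) (w w' : List G.Sym) : Prop :=
  (∃ r ∈ G.cf, ∃ x y, w = x ++ [G.ntSym r.1] ++ y ∧
    w' = x ++ (if r.2.2.2 then [G.toSym r.2.1, G.ntSym r.2.2.1]
               else [G.ntSym r.2.2.1, G.toSym r.2.1]) ++ y) ∨
  (∃ x y, w = x ++ [G.abcd 0, G.abcd 1] ++ y ∧ w' = x ++ y) ∨
  (∃ x y, w = x ++ [G.abcd 2, G.abcd 3] ++ y ∧ w' = x ++ y) ∨
  (∃ x y, w = x ++ [G.ntSym G.S'] ++ y ∧ w' = x ++ y)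

/-- The derivation relation (reflexive-transitive closure of `Step`). -/
def Derives (G : SGNF T) : List G.Sym → List G.Sym → Prop :=
  Relation.ReflTransGen G.Step

/-- The language generated by the grammar. -/
def language (G : SGNF T) : Set (List T) :=
  {w | G.Derives [G.ntSym G.S] (w.map Sum.inr)}

end SGNF

/-! ## auxiliary -/

theorem unique_align {α : Type*} {σ : α} :
    ∀ {l₁ l₃ : List α} {l₂ l₄ : List α}, σ ∉ l₁ → σ ∉ l₂ →
      l₁ ++ σ :: l₂ = l₃ ++ σ :: l₄ → l₁ = l₃ ∧ l₂ = l₄ := by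
  intro l₁
  induction l₁ with
  | nil =>
    intro l₃ l₂ l₄ _ h2 h
    cases l₃ with
    | nil => simpa using h
    | cons a l₃' =>
      simp only [List.nil_append, List.cons_append, List.cons.injEq] at h
      exact absurd (h.2 ▸ List.mem_append_right l₃' (List.mem_cons_self (a := σ) (l := l₄))) h2
  | cons a l₁' ih =>
    intro l₃ l₂ l₄ h1 h2 h
    cases l₃ with
    | nil =>
      simp only [List.cons_append, List.nil_append, List.cons.injEq] at h
      exact absurd (h.1 ▸ List.mem_cons_self (a := a) (l := l₁')) h1
    | cons b l₃' =>
      simp only [List.cons_append, List.cons.injEq] at h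
      obtain ⟨rfl, h⟩ := h
      obtain ⟨h3, h4⟩ := ih (fun hm => h1 (List.mem_cons_of_mem _ hm)) h2 h
      exact ⟨by rw [h3], h4⟩

theorem mem_of_eq_append {α : Type*} {w x y : List α} {a : α}
    (h : w = x ++ a :: y) : a ∈ w := by subst h; simp

namespace Dir2

variable {T : Type} (G : Grammar T)

abbrev nR : ℕ := G.rules.length
abbrev U (i : Fin (nR G)) : List (G.NT ⊕ T) := (G.rules.get i).1
abbrev Vr (i : Fin (nR G)) : List (G.NT ⊕ T) := (G.rules.get i).2
abbrev P (i : Fin (nR G)) : ℕ := (U G i).length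
abbrev Q (i : Fin (nR G)) : ℕ := (Vr G i).length
abbrev N (i : Fin (nR G)) : ℕ := P G i + Q G i

def Mmax : ℕ := (G.rules.map (fun r => r.1.length + r.2.length)).foldr max 0

lemma N_le_Mmax (i : Fin (nR G)) : N G i ≤ Mmax G := by
  have hm : P G i + Q G i ∈ G.rules.map (fun r => r.1.length + r.2.length) :=
    List.mem_map_of_mem (G.rules.get_mem i)
  unfold Mmax
  generalize G.rules.map (fun r => r.1.length + r.2.length) = l at hm ⊢
  induction l with
  | nil => simp at hm
  | cons a l ih =>
    rcases List.mem_cons.mp hm with h | h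
    · simp [h, le_max_iff]
    · simp only [List.foldr_cons, le_max_iff]; exact Or.inr (ih h)

lemma P_pos (i : Fin (nR G)) : 0 < P G i := by
  obtain ⟨X, hX⟩ := G.lhs_nt _ (G.rules.get_mem i)
  exact List.length_pos_iff.mpr (List.ne_nil_of_mem hX)

/-- the alphabet -/
abbrev Al : Type := (G.NT ⊕ T) ⊕ Option (Fin (nR G) × Fin (Mmax G + 1))

def enc : List (G.NT ⊕ T) → List (Al G) := List.map Sum.inl
def mk : Al G := Sum.inr none
def sg (i : Fin (nR G)) (e : ℕ) : Al G :=
  Sum.inr (some (i, ⟨e % (Mmax G + 1), Nat.mod_lt _ (Nat.succ_pos _)⟩))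

lemma enc_append (X Y : List (G.NT ⊕ T)) : enc G (X ++ Y) = enc G X ++ enc G Y :=
  List.map_append

lemma mk_not_mem_enc (Z : List (G.NT ⊕ T)) : mk G ∉ enc G Z := by
  simp [enc, mk]

lemma sg_not_mem_enc (i e) (Z : List (G.NT ⊕ T)) : sg G i e ∉ enc G Z := by
  simp [enc, sg]

lemma mk_ne_sg (i e) : mk G ≠ sg G i e := by simp [mk, sg]

lemma inl_ne_mk (a : G.NT ⊕ T) : (Sum.inl a : Al G) ≠ mk G := by simp [mk]

lemma inl_ne_sg (a : G.NT ⊕ T) (i e) : (Sum.inl a : Al G) ≠ sg G i e := by simp [sg]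

lemma sg_inj {i i' : Fin (nR G)} {e e' : ℕ} (he : e ≤ Mmax G) (he' : e' ≤ Mmax G)
    (h : sg G i e = sg G i' e') : i = i' ∧ e = e' := by
  simp only [sg, Sum.inr.injEq, Option.some.injEq, Prod.mk.injEq, Fin.mk.injEq] at h
  refine ⟨h.1, ?_⟩
  have := h.2
  rwa [Nat.mod_eq_of_lt (by omega), Nat.mod_eq_of_lt (by omega)] at this

lemma mem_enc_or {w : Al G} {Z : List (G.NT ⊕ T)} (h : w ∈ enc G Z) :
    ∃ a, w = Sum.inl a := by
  simp only [enc, List.mem_map] at h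
  obtain ⟨a, _, rfl⟩ := h; exact ⟨a, rfl⟩

end Dir2

namespace Dir2

variable {T : Type} (G : Grammar T)

open InsDelRule

/-- rule: jump-delete marker (comp 0 → comp 1) -/
def J1 : Fin 4 × InsDelRule (Al G) × Fin 4 := (0, del [] [mk G] [], 1)
/-- rule: insert marker anywhere (comp 1 → comp 0) -/
def J2 : Fin 4 × InsDelRule (Al G) × Fin 4 := (1, ins [] [mk G] [], 0)
/-- protocol entry: insert stage-0 marker after m -/
def E1 (i : Fin (nR G)) : Fin 4 × InsDelRule (Al G) × Fin 4 :=
  (0, ins [mk G] [sg G i 0] [], 2)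
/-- protocol entry: delete m before stage-0 marker -/
def E2 (i : Fin (nR G)) : Fin 4 × InsDelRule (Al G) × Fin 4 :=
  (2, del [] [mk G] [sg G i 0], 2)
/-- action: delete a symbol of the lhs before the stage marker -/
def Adel (i : Fin (nR G)) (e : Fin (P G i)) : Fin 4 × InsDelRule (Al G) × Fin 4 :=
  (2, del [] [Sum.inl ((U G i).get ⟨P G i - 1 - e.val,
      show P G i - 1 - e.val < P G i by have := e.isLt; omega⟩)] [sg G i e.val], 3)
/-- action: insert a symbol of the rhs after the stage marker -/
def Ains (i : Fin (nR G)) (f : Fin (Q G i)) : Fin 4 × InsDelRule (Al G) × Fin 4 :=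
  (2, ins [sg G i (P G i + f.val)] [Sum.inl ((Vr G i).get ⟨Q G i - 1 - f.val,
      show Q G i - 1 - f.val < Q G i by have := f.isLt; omega⟩)] [], 3)
/-- stage swap: insert next stage marker -/
def S1 (i : Fin (nR G)) (e : ℕ) : Fin 4 × InsDelRule (Al G) × Fin 4 :=
  (3, ins [sg G i e] [sg G i (e+1)] [], 0)
/-- stage swap: delete old stage marker -/
def S2 (i : Fin (nR G)) (e : ℕ) : Fin 4 × InsDelRule (Al G) × Fin 4 :=
  (0, del [] [sg G i e] [sg G i (e+1)], 2)
/-- protocol exit: delete final stage marker -/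
def XR (i : Fin (nR G)) : Fin 4 × InsDelRule (Al G) × Fin 4 :=
  (3, del [] [sg G i (N G i - 1)] [], 1)

def Rules : List (Fin 4 × InsDelRule (Al G) × Fin 4) :=
  [J1 G, J2 G] ++ (List.finRange (nR G)).flatMap (fun i =>
    [E1 G i, E2 G i, XR G i]
    ++ (List.finRange (P G i)).map (Adel G i)
    ++ (List.finRange (Q G i)).map (Ains G i)
    ++ (List.range (N G i - 1)).map (S1 G i)
    ++ (List.range (N G i - 1)).map (S2 G i))

lemma mem_Rules_iff (r) : r ∈ Rules G ↔
    r = J1 G ∨ r = J2 G ∨ ∃ i,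
      (r = E1 G i ∨ r = E2 G i ∨ r = XR G i ∨
       (∃ e : Fin (P G i), r = Adel G i e) ∨
       (∃ f : Fin (Q G i), r = Ains G i f) ∨
       (∃ e, e < N G i - 1 ∧ r = S1 G i e) ∨
       (∃ e, e < N G i - 1 ∧ r = S2 G i e)) := by
  simp only [Rules, List.mem_append, List.mem_cons, List.mem_flatMap, List.mem_map,
    List.mem_finRange, List.mem_range, List.mem_singleton, List.not_mem_nil, or_false, true_and]
  constructor
  · rintro ((rfl | rfl) | ⟨i, ((((h | h | h) | ⟨e, he⟩) | ⟨f, hf⟩) | ⟨e, he, h⟩) | ⟨e, he, h⟩⟩)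
    · exact Or.inl rfl
    · exact Or.inr (Or.inl rfl)
    · exact Or.inr (Or.inr ⟨i, Or.inl h⟩)
    · exact Or.inr (Or.inr ⟨i, Or.inr (Or.inl h)⟩)
    · exact Or.inr (Or.inr ⟨i, Or.inr (Or.inr (Or.inl h))⟩)
    · exact Or.inr (Or.inr ⟨i, Or.inr (Or.inr (Or.inr (Or.inl ⟨e, he.symm⟩)))⟩)
    · exact Or.inr (Or.inr ⟨i, Or.inr (Or.inr (Or.inr (Or.inr (Or.inl ⟨f, hf.symm⟩))))⟩)
    · exact Or.inr (Or.inr ⟨i,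
        Or.inr (Or.inr (Or.inr (Or.inr (Or.inr (Or.inl ⟨e, he, h.symm⟩)))))⟩)
    · exact Or.inr (Or.inr ⟨i,
        Or.inr (Or.inr (Or.inr (Or.inr (Or.inr (Or.inr ⟨e, he, h.symm⟩)))))⟩)
  · rintro (rfl | rfl | ⟨i, (h | h | h | ⟨e, rfl⟩ | ⟨f, rfl⟩ | ⟨e, he, rfl⟩ | ⟨e, he, rfl⟩)⟩)
    · exact Or.inl (Or.inl rfl)
    · exact Or.inl (Or.inr rfl)
    · exact Or.inr ⟨i, Or.inl (Or.inl (Or.inl (Or.inl (Or.inl h))))⟩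
    · exact Or.inr ⟨i, Or.inl (Or.inl (Or.inl (Or.inl (Or.inr (Or.inl h)))))⟩
    · exact Or.inr ⟨i, Or.inl (Or.inl (Or.inl (Or.inl (Or.inr (Or.inr h)))))⟩
    · exact Or.inr ⟨i, Or.inl (Or.inl (Or.inl (Or.inr ⟨e, rfl⟩)))⟩
    · exact Or.inr ⟨i, Or.inl (Or.inl (Or.inr ⟨f, rfl⟩))⟩
    · exact Or.inr ⟨i, Or.inl (Or.inr ⟨e, he, rfl⟩)⟩
    · exact Or.inr ⟨i, Or.inr ⟨e, he, rfl⟩⟩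

end Dir2

namespace Dir2

variable {T : Type} (G : Grammar T)

open InsDelRule

noncomputable def Sys [Finite T] : GCID (Al G) T where
  k := 4
  hV := by have := G.hNT; infer_instance
  emb := fun t => Sum.inl (Sum.inr t)
  embInj := fun a b h => by
    simpa using h
  axioms := [[mk G, Sum.inl (Sum.inl G.start)]]
  i0 := 0
  ifin := 1
  R := Rules G
  mid_ne := by
    intro r hr
    rcases (mem_Rules_iff G r).mp hr with rfl | rfl |
      ⟨i, (rfl | rfl | rfl | ⟨e, rfl⟩ | ⟨f, rfl⟩ | ⟨e, he, rfl⟩ | ⟨e, he, rfl⟩)⟩ <;>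
      simp [J1, J2, E1, E2, XR, Adel, Ains, S1, S2, InsDelRule.mid]

lemma Sys_size [Finite T] : (Sys G).SizeLE 1 1 0 1 0 1 := by
  intro r hr
  rcases (mem_Rules_iff G r).mp hr with rfl | rfl |
    ⟨i, (rfl | rfl | rfl | ⟨e, rfl⟩ | ⟨f, rfl⟩ | ⟨e, he, rfl⟩ | ⟨e, he, rfl⟩)⟩ <;>
    simp [J1, J2, E1, E2, XR, Adel, Ains, S1, S2, InsDelRule.SizeLE]

abbrev D (s : List (G.NT ⊕ T)) : Prop := G.Derives [Sum.inl G.start] s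

inductive Inv : Fin 4 × List (Al G) → Prop
  | stable (X Y) (h : D G (X ++ Y)) : Inv (0, enc G X ++ mk G :: enc G Y)
  | null (S) (h : D G S) : Inv (1, enc G S)
  | entry (i) (X Y) (h : D G (X ++ Y)) : Inv (2, enc G X ++ mk G :: sg G i 0 :: enc G Y)
  | pre (i) (e : ℕ) (he : e < N G i) (X Y)
      (h : D G (X ++ (U G i).drop (P G i - e) ++ Y)) :
      Inv (2, enc G X ++ sg G i e :: enc G ((Vr G i).drop (Q G i - (e - P G i)) ++ Y))
  | post (i) (e : ℕ) (he : e < N G i) (X Y)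
      (h : D G (X ++ (U G i).drop (P G i - (e+1)) ++ Y)) :
      Inv (3, enc G X ++ sg G i e :: enc G ((Vr G i).drop (Q G i - (e + 1 - P G i)) ++ Y))
  | swap (i) (e : ℕ) (he : e + 1 < N G i) (X Y)
      (h : D G (X ++ (U G i).drop (P G i - (e+1)) ++ Y)) :
      Inv (0, enc G X ++ sg G i e :: sg G i (e+1) ::
        enc G ((Vr G i).drop (Q G i - (e + 1 - P G i)) ++ Y))

lemma mem_shape2 {w : Al G} {X Y : List (G.NT ⊕ T)} {μ : Al G}
    (h : w ∈ enc G X ++ μ :: enc G Y) : (∃ a, w = Sum.inl a) ∨ w = μ := by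
  rcases List.mem_append.mp h with h | h
  · exact Or.inl (mem_enc_or G h)
  · rcases List.mem_cons.mp h with h | h
    · exact Or.inr h
    · exact Or.inl (mem_enc_or G h)

lemma mem_shape3 {w : Al G} {X Y : List (G.NT ⊕ T)} {μ ν : Al G}
    (h : w ∈ enc G X ++ μ :: ν :: enc G Y) : (∃ a, w = Sum.inl a) ∨ w = μ ∨ w = ν := by
  rcases List.mem_append.mp h with h | h
  · exact Or.inl (mem_enc_or G h)
  · rcases List.mem_cons.mp h with h | h
    · exact Or.inr (Or.inl h)
    · rcases List.mem_cons.mp h with h | h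
      · exact Or.inr (Or.inr h)
      · exact Or.inl (mem_enc_or G h)

end Dir2

namespace Dir2

variable {T : Type} (G : Grammar T)

open InsDelRule

lemma not_mem_enc_of_ne_inl {μ : Al G} (h : ∀ a, μ ≠ Sum.inl a) (Z : List (G.NT ⊕ T)) :
    μ ∉ enc G Z := fun hm => by obtain ⟨a, rfl⟩ := mem_enc_or G hm; exact h a rfl

lemma align_mid {X Y : List (G.NT ⊕ T)} {x y : List (Al G)} {μ : Al G}
    (hμ : ∀ a, μ ≠ (Sum.inl a : Al G))
    (h : enc G X ++ μ :: enc G Y = x ++ μ :: y) : enc G X = x ∧ enc G Y = y :=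
  unique_align (not_mem_enc_of_ne_inl G hμ X) (not_mem_enc_of_ne_inl G hμ Y) h

lemma mk_ne_inl (a : G.NT ⊕ T) : mk G ≠ Sum.inl a := by simp [mk]
lemma sg_ne_inl (i e) (a : G.NT ⊕ T) : sg G i e ≠ Sum.inl a := by simp [sg]
lemma sg_ne_mk (i e) : sg G i e ≠ mk G := by simp [sg, mk]

lemma enc_cons (a : G.NT ⊕ T) (Z : List (G.NT ⊕ T)) :
    (Sum.inl a : Al G) :: enc G Z = enc G (a :: Z) := rfl

lemma enc_eq_append_singleton {X : List (G.NT ⊕ T)} {x : List (Al G)} {a : G.NT ⊕ T}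
    (h : enc G X = x ++ [Sum.inl a]) : ∃ X', X = X' ++ [a] ∧ enc G X' = x := by
  obtain ⟨X₁, X₂, rfl, h1, h2⟩ := List.map_eq_append_iff.mp h
  match X₂, h2 with
  | [b], h2 =>
    simp only [enc, List.map_cons, List.map_nil, List.cons.injEq, Sum.inl.injEq] at h2
    exact ⟨X₁, by rw [h2.1], h1⟩

theorem inv_preserved [Finite T] : ∀ {c c' : Fin 4 × List (Al G)},
    Inv G c → (Sys G).Tr c c' → Inv G c' := by
  rintro ⟨ci, w⟩ ⟨j, w'⟩ hI ⟨r, hr, hsrc, htgt, hap⟩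
  simp only at hsrc htgt
  rcases (mem_Rules_iff G r).mp hr with rfl | rfl |
    ⟨i', (rfl | rfl | rfl | ⟨e', rfl⟩ | ⟨f', rfl⟩ | ⟨e', he', rfl⟩ | ⟨e', he', rfl⟩)⟩
  · -- J1
    simp only [J1] at hsrc htgt
    subst hsrc; subst htgt
    obtain ⟨x, y, hw, hw'⟩ := hap
    simp only [List.nil_append, List.append_nil, List.append_assoc, List.singleton_append,
      List.cons_append] at hw hw'
    cases hI with
    | stable X Y h =>
      obtain ⟨hx, hy⟩ := align_mid G (mk_ne_inl G) hw
      rw [hw', ← hx, ← hy, ← enc_append]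
      exact Inv.null (X ++ Y) h
    | swap i e he X Y h =>
      rcases mem_shape3 G (mem_of_eq_append hw) with ⟨a, ha⟩ | ha | ha
      · exact absurd ha (mk_ne_inl G a)
      · exact absurd ha (mk_ne_sg G _ _)
      · exact absurd ha (mk_ne_sg G _ _)
  · -- J2
    simp only [J2] at hsrc htgt
    subst hsrc; subst htgt
    obtain ⟨x, y, hw, hw'⟩ := hap
    simp only [List.nil_append, List.append_nil, List.append_assoc, List.singleton_append,
      List.cons_append] at hw hw'
    cases hI with
    | null S h =>
      obtain ⟨S₁, S₂, hS, h1, h2⟩ := List.map_eq_append_iff.mp hw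
      rw [hw', ← h1, ← h2]
      exact Inv.stable S₁ S₂ (hS ▸ h)
  · -- E1
    simp only [E1] at hsrc htgt
    subst hsrc; subst htgt
    obtain ⟨x, y, hw, hw'⟩ := hap
    simp only [List.nil_append, List.append_nil, List.append_assoc, List.singleton_append,
      List.cons_append] at hw hw'
    cases hI with
    | stable X Y h =>
      obtain ⟨hx, hy⟩ := align_mid G (mk_ne_inl G) hw
      rw [hw', ← hx, ← hy]
      exact Inv.entry i' X Y h
    | swap i e he X Y h =>
      rcases mem_shape3 G (mem_of_eq_append hw) with ⟨a, ha⟩ | ha | ha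
      · exact absurd ha (mk_ne_inl G a)
      · exact absurd ha (mk_ne_sg G _ _)
      · exact absurd ha (mk_ne_sg G _ _)
  · -- E2
    simp only [E2] at hsrc htgt
    subst hsrc; subst htgt
    obtain ⟨x, y, hw, hw'⟩ := hap
    simp only [List.nil_append, List.append_nil, List.append_assoc, List.singleton_append,
      List.cons_append] at hw hw'
    cases hI with
    | entry i X Y h =>
      have hm : sg G i' 0 ∈ enc G X ++ mk G :: sg G i 0 :: enc G Y := by rw [hw]; simp
      rcases mem_shape3 G hm with ⟨a, ha⟩ | ha | ha
      · exact absurd ha (sg_ne_inl G i' 0 a)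
      · exact absurd ha (sg_ne_mk G i' 0)
      · obtain ⟨rfl, -⟩ := sg_inj G (Nat.zero_le _) (Nat.zero_le _) ha
        have hw2 : (enc G X ++ [mk G]) ++ sg G i' 0 :: enc G Y
            = (x ++ [mk G]) ++ sg G i' 0 :: y := by
          simpa [List.append_assoc] using hw
        have hal := unique_align (l₁ := enc G X ++ [mk G]) (l₃ := x ++ [mk G])
          (by simp only [List.mem_append, List.mem_singleton]
              rintro (hc | hc)
              exacts [not_mem_enc_of_ne_inl G (sg_ne_inl G i' 0) X hc,
                sg_ne_mk G i' 0 hc])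
          (not_mem_enc_of_ne_inl G (sg_ne_inl G i' 0) Y) hw2
        obtain ⟨hx, hy⟩ := (List.append_inj' hal.1 rfl)
        rw [hw', ← hx, ← hal.2]
        have hpre := Inv.pre (G := G) i' 0 (Nat.lt_of_lt_of_le (P_pos G i') (Nat.le_add_right _ _)) X Y
          (by simpa [List.drop_length] using h)
        simpa [List.drop_length] using hpre
    | pre i e he X Y h =>
      have hm : mk G ∈ enc G X ++ sg G i e ::
          enc G ((Vr G i).drop (Q G i - (e - P G i)) ++ Y) := by rw [hw]; simp
      rcases mem_shape2 G hm with ⟨a, ha⟩ | ha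
      · exact absurd ha (mk_ne_inl G a)
      · exact absurd ha (mk_ne_sg G _ _)

  · -- XR
    simp only [XR] at hsrc htgt
    subst hsrc; subst htgt
    obtain ⟨x, y, hw, hw'⟩ := hap
    simp only [List.nil_append, List.append_nil, List.append_assoc, List.singleton_append,
      List.cons_append] at hw hw'
    cases hI with
    | post i e he X Y h =>
      have hN := N_le_Mmax G i
      have hNi : N G i = P G i + Q G i := rfl
      have hN' := N_le_Mmax G i'
      have hm : sg G i' (N G i' - 1) ∈ enc G X ++ sg G i e ::
          enc G ((Vr G i).drop (Q G i - (e + 1 - P G i)) ++ Y) := by rw [hw]; simp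
      rcases mem_shape2 G hm with ⟨a, ha⟩ | ha
      · exact absurd ha (sg_ne_inl G _ _ a)
      · obtain ⟨rfl, hee⟩ := sg_inj G (by omega) (by omega) ha
        subst hee
        obtain ⟨hx, hy⟩ := align_mid G (sg_ne_inl G i' _) hw
        have h1 : (U G i').drop (P G i' - (N G i' - 1 + 1)) = U G i' := by
          rw [show P G i' - (N G i' - 1 + 1) = 0 by omega, List.drop_zero]
        have h2 : (Vr G i').drop (Q G i' - (N G i' - 1 + 1 - P G i')) = Vr G i' := by
          rw [show Q G i' - (N G i' - 1 + 1 - P G i') = 0 by omega, List.drop_zero]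
        rw [h1] at h
        have hD : D G (X ++ Vr G i' ++ Y) :=
          h.tail ⟨G.rules.get i', G.rules.get_mem i', X, Y, rfl, rfl⟩
        rw [hw', ← hx, ← hy, h2, ← enc_append]
        have := Inv.null (G := G) (X ++ (Vr G i' ++ Y))
          (by simpa [List.append_assoc] using hD)
        simpa using this
  · -- Adel
    simp only [Adel] at hsrc htgt
    subst hsrc; subst htgt
    obtain ⟨x, y, hw, hw'⟩ := hap
    simp only [List.nil_append, List.append_nil, List.append_assoc, List.singleton_append,
      List.cons_append] at hw hw'
    have he'2 := e'.isLt
    have hN' := N_le_Mmax G i'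
    have hNi' : N G i' = P G i' + Q G i' := rfl
    cases hI with
    | entry i X Y h =>
      have hm : sg G i' e'.val ∈ enc G X ++ mk G :: sg G i 0 :: enc G Y := by
        rw [hw]; simp
      rcases mem_shape3 G hm with ⟨a, ha⟩ | ha | ha
      · exact absurd ha (sg_ne_inl G _ _ a)
      · exact absurd ha (sg_ne_mk G _ _)
      · obtain ⟨rfl, hee⟩ := sg_inj G (by omega) (by omega) ha
        rw [ha] at hw
        have hw2 : (enc G X ++ [mk G]) ++ sg G i' 0 :: enc G Y
            = (x ++ [Sum.inl ((U G i').get ⟨P G i' - 1 - e'.val,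
                show P G i' - 1 - e'.val < P G i' by omega⟩)]) ++ sg G i' 0 :: y := by
          simpa [List.append_assoc] using hw
        have hal := unique_align (l₁ := enc G X ++ [mk G])
          (by simp only [List.mem_append, List.mem_singleton]
              rintro (hc | hc)
              exacts [not_mem_enc_of_ne_inl G (sg_ne_inl G i' 0) X hc,
                sg_ne_mk G i' 0 hc])
          (not_mem_enc_of_ne_inl G (sg_ne_inl G i' 0) Y) hw2
        obtain ⟨-, hcon⟩ := List.append_inj' hal.1 rfl
        simp only [List.cons.injEq] at hcon
        exact absurd hcon.1 (mk_ne_inl G _)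
    | pre i e he X Y h =>
      have hN := N_le_Mmax G i
      have hNi : N G i = P G i + Q G i := rfl
      have hm : sg G i' e'.val ∈ enc G X ++ sg G i e ::
          enc G ((Vr G i).drop (Q G i - (e - P G i)) ++ Y) := by rw [hw]; simp
      rcases mem_shape2 G hm with ⟨a, ha⟩ | ha
      · exact absurd ha (sg_ne_inl G _ _ a)
      · obtain ⟨rfl, hee⟩ := sg_inj G (by omega) (by omega) ha
        subst hee
        have hw2 : (enc G X) ++ sg G i' e'.val ::
            enc G ((Vr G i').drop (Q G i' - (e'.val - P G i')) ++ Y)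
            = (x ++ [Sum.inl ((U G i').get ⟨P G i' - 1 - e'.val,
                show P G i' - 1 - e'.val < P G i' by omega⟩)]) ++
              sg G i' e'.val :: y := by
          simpa [List.append_assoc] using hw
        have hal := unique_align (not_mem_enc_of_ne_inl G (sg_ne_inl G i' e'.val) X)
          (not_mem_enc_of_ne_inl G (sg_ne_inl G i' e'.val) _) hw2
        obtain ⟨X', hX, hx⟩ := enc_eq_append_singleton G hal.1
        subst hX
        have key : [(U G i').get ⟨P G i' - 1 - e'.val,
            show P G i' - 1 - e'.val < P G i' by omega⟩] ++
            (U G i').drop (P G i' - e'.val)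
            = (U G i').drop (P G i' - (e'.val+1)) := by
          rw [show P G i' - (e'.val+1) = P G i' - 1 - e'.val by omega,
            List.drop_eq_getElem_cons (show P G i' - 1 - e'.val < P G i' by omega),
            show P G i' - 1 - e'.val + 1 = P G i' - e'.val by omega]
          rfl
        have h' : D G (X' ++ (U G i').drop (P G i' - (e'.val+1)) ++ Y) := by
          rw [← key]; simpa [List.append_assoc] using h
        have hq : Q G i' - (e'.val + 1 - P G i') = Q G i' - (e'.val - P G i') := by omega
        rw [hw', ← hx, ← hal.2]
        have := Inv.post (G := G) i' e'.val he X' Y h'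
        rwa [hq] at this
  · -- Ains
    simp only [Ains] at hsrc htgt
    subst hsrc; subst htgt
    obtain ⟨x, y, hw, hw'⟩ := hap
    simp only [List.nil_append, List.append_nil, List.append_assoc, List.singleton_append,
      List.cons_append] at hw hw'
    have hf'2 := f'.isLt
    have hN' := N_le_Mmax G i'
    have hNi' : N G i' = P G i' + Q G i' := rfl
    cases hI with
    | entry i X Y h =>
      have hm : sg G i' (P G i' + f'.val) ∈ enc G X ++ mk G :: sg G i 0 :: enc G Y := by
        rw [hw]; simp
      rcases mem_shape3 G hm with ⟨a, ha⟩ | ha | ha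
      · exact absurd ha (sg_ne_inl G _ _ a)
      · exact absurd ha (sg_ne_mk G _ _)
      · obtain ⟨rfl, hee⟩ := sg_inj G (by omega) (by omega) ha
        have := P_pos G i'
        omega
    | pre i e he X Y h =>
      have hN := N_le_Mmax G i
      have hNi : N G i = P G i + Q G i := rfl
      have hm : sg G i' (P G i' + f'.val) ∈ enc G X ++ sg G i e ::
          enc G ((Vr G i).drop (Q G i - (e - P G i)) ++ Y) := by rw [hw]; simp
      rcases mem_shape2 G hm with ⟨a, ha⟩ | ha
      · exact absurd ha (sg_ne_inl G _ _ a)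
      · obtain ⟨rfl, hee⟩ := sg_inj G (by omega) (by omega) ha
        subst hee
        obtain ⟨hx, hy⟩ := align_mid G (sg_ne_inl G i' _) hw
        have hkey : (Vr G i').drop (Q G i' - (P G i' + f'.val + 1 - P G i'))
            = (Vr G i').get ⟨Q G i' - 1 - f'.val,
                show Q G i' - 1 - f'.val < Q G i' by omega⟩ ::
              (Vr G i').drop (Q G i' - (P G i' + f'.val - P G i')) := by
          rw [show Q G i' - (P G i' + f'.val + 1 - P G i') = Q G i' - 1 - f'.val by omega,
            List.drop_eq_getElem_cons (show Q G i' - 1 - f'.val < Q G i' by omega),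
            show Q G i' - 1 - f'.val + 1 = Q G i' - (P G i' + f'.val - P G i') by omega]
          rfl
        have hq : P G i' - (P G i' + f'.val + 1) = P G i' - (P G i' + f'.val) := by omega
        rw [hw', ← hx, ← hy, enc_cons, ← List.cons_append, ← hkey]
        exact Inv.post (G := G) i' (P G i' + f'.val) he X Y (by rw [hq]; exact h)
  · -- S1
    simp only [S1] at hsrc htgt
    subst hsrc; subst htgt
    obtain ⟨x, y, hw, hw'⟩ := hap
    simp only [List.nil_append, List.append_nil, List.append_assoc, List.singleton_append,
      List.cons_append] at hw hw'
    have hN' := N_le_Mmax G i'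
    have hNi' : N G i' = P G i' + Q G i' := rfl
    cases hI with
    | post i e he X Y h =>
      have hN := N_le_Mmax G i
      have hNi : N G i = P G i + Q G i := rfl
      have hm : sg G i' e' ∈ enc G X ++ sg G i e ::
          enc G ((Vr G i).drop (Q G i - (e + 1 - P G i)) ++ Y) := by rw [hw]; simp
      rcases mem_shape2 G hm with ⟨a, ha⟩ | ha
      · exact absurd ha (sg_ne_inl G _ _ a)
      · obtain ⟨rfl, hee⟩ := sg_inj G (by omega) (by omega) ha
        subst hee
        obtain ⟨hx, hy⟩ := align_mid G (sg_ne_inl G i' _) hw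
        rw [hw', ← hx, ← hy]
        exact Inv.swap i' e' (by omega) X Y h
  · -- S2
    simp only [S2] at hsrc htgt
    subst hsrc; subst htgt
    obtain ⟨x, y, hw, hw'⟩ := hap
    simp only [List.nil_append, List.append_nil, List.append_assoc, List.singleton_append,
      List.cons_append] at hw hw'
    have hN' := N_le_Mmax G i'
    have hNi' : N G i' = P G i' + Q G i' := rfl
    cases hI with
    | stable X Y h =>
      have hm : sg G i' e' ∈ enc G X ++ mk G :: enc G Y := by rw [hw]; simp
      rcases mem_shape2 G hm with ⟨a, ha⟩ | ha
      · exact absurd ha (sg_ne_inl G _ _ a)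
      · exact absurd ha (sg_ne_mk G _ _)
    | swap i e he X Y h =>
      have hN := N_le_Mmax G i
      have hNi : N G i = P G i + Q G i := rfl
      have hm : sg G i' (e' + 1) ∈ enc G X ++ sg G i e :: sg G i (e+1) ::
          enc G ((Vr G i).drop (Q G i - (e + 1 - P G i)) ++ Y) := by rw [hw]; simp
      rcases mem_shape3 G hm with ⟨a, ha⟩ | ha | ha
      · exact absurd ha (sg_ne_inl G _ _ a)
      · -- e' + 1 = e : would place sg i' e' inside enc X, contradiction
        obtain ⟨rfl, hee⟩ := sg_inj G (by omega) (by omega) ha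
        subst hee
        have hw2 : enc G X ++ sg G i' (e'+1) ::
            (sg G i' (e'+1+1) :: enc G ((Vr G i').drop (Q G i' - (e'+1+1 - P G i')) ++ Y))
            = (x ++ [sg G i' e']) ++ sg G i' (e'+1) :: y := by
          simpa [List.append_assoc] using hw
        have hal := unique_align (not_mem_enc_of_ne_inl G (sg_ne_inl G i' (e'+1)) X)
          (by intro hc
              rcases List.mem_cons.mp hc with hc | hc
              · exact absurd (sg_inj G (by omega) (by omega) hc).2 (by omega)
              · exact not_mem_enc_of_ne_inl G (sg_ne_inl G i' (e'+1)) _ hc) hw2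
        have : sg G i' e' ∈ enc G X := by rw [hal.1]; simp
        exact absurd this (not_mem_enc_of_ne_inl G (sg_ne_inl G i' e') X)
      · obtain ⟨rfl, hee⟩ := sg_inj G (by omega) (by omega) ha
        have hee' : e = e' := by omega
        subst hee'
        have hw2 : (enc G X ++ [sg G i' e]) ++ sg G i' (e+1) ::
            enc G ((Vr G i').drop (Q G i' - (e + 1 - P G i')) ++ Y)
            = (x ++ [sg G i' e]) ++ sg G i' (e+1) :: y := by
          simpa [List.append_assoc] using hw
        have hal := unique_align (l₁ := enc G X ++ [sg G i' e])
          (by simp only [List.mem_append, List.mem_singleton]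
              rintro (hc | hc)
              · exact not_mem_enc_of_ne_inl G (sg_ne_inl G i' (e+1)) X hc
              · exact absurd (sg_inj G (by omega) (by omega) hc).2 (by omega))
          (not_mem_enc_of_ne_inl G (sg_ne_inl G i' (e+1)) _) hw2
        obtain ⟨hx, -⟩ := List.append_inj' hal.1 rfl
        rw [hw', ← hx, ← hal.2]
        exact Inv.pre i' (e+1) he X Y h

end Dir2

namespace Dir2

variable {T : Type} (G : Grammar T)

open InsDelRule

lemma J1_mem : J1 G ∈ Rules G := (mem_Rules_iff G _).mpr (Or.inl rfl)
lemma J2_mem : J2 G ∈ Rules G := (mem_Rules_iff G _).mpr (Or.inr (Or.inl rfl))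
lemma E1_mem (i) : E1 G i ∈ Rules G :=
  (mem_Rules_iff G _).mpr (Or.inr (Or.inr ⟨i, Or.inl rfl⟩))
lemma E2_mem (i) : E2 G i ∈ Rules G :=
  (mem_Rules_iff G _).mpr (Or.inr (Or.inr ⟨i, Or.inr (Or.inl rfl)⟩))
lemma XR_mem (i) : XR G i ∈ Rules G :=
  (mem_Rules_iff G _).mpr (Or.inr (Or.inr ⟨i, Or.inr (Or.inr (Or.inl rfl))⟩))
lemma Adel_mem (i) (e : Fin (P G i)) : Adel G i e ∈ Rules G :=
  (mem_Rules_iff G _).mpr (Or.inr (Or.inr ⟨i, Or.inr (Or.inr (Or.inr (Or.inl ⟨e, rfl⟩)))⟩))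
lemma Ains_mem (i) (f : Fin (Q G i)) : Ains G i f ∈ Rules G :=
  (mem_Rules_iff G _).mpr
    (Or.inr (Or.inr ⟨i, Or.inr (Or.inr (Or.inr (Or.inr (Or.inl ⟨f, rfl⟩))))⟩))
lemma S1_mem (i) (e : ℕ) (h : e < N G i - 1) : S1 G i e ∈ Rules G :=
  (mem_Rules_iff G _).mpr
    (Or.inr (Or.inr ⟨i, Or.inr (Or.inr (Or.inr (Or.inr (Or.inr (Or.inl ⟨e, h, rfl⟩)))))⟩))
lemma S2_mem (i) (e : ℕ) (h : e < N G i - 1) : S2 G i e ∈ Rules G :=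
  (mem_Rules_iff G _).mpr
    (Or.inr (Or.inr ⟨i, Or.inr (Or.inr (Or.inr (Or.inr (Or.inr (Or.inr ⟨e, h, rfl⟩)))))⟩))

lemma tr_step [Finite T] {r} (hr : r ∈ Rules G) {i j : Fin 4} {w w' : List (Al G)}
    (h1 : r.1 = i) (h2 : r.2.2 = j) (hap : r.2.1.Applies w w') :
    (Sys G).Tr (i, w) (j, w') := ⟨r, hr, h1, h2, hap⟩

lemma run_from_pre [Finite T] (i : Fin (nR G)) :
    ∀ k e, N G i - e = k → e < N G i → ∀ X Y,
      Relation.ReflTransGen (Sys G).Tr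
        ((2 : Fin 4), enc G (X ++ (U G i).take (P G i - e)) ++ sg G i e ::
          enc G ((Vr G i).drop (Q G i - (e - P G i)) ++ Y))
        ((1 : Fin 4), enc G (X ++ Vr G i ++ Y)) := by
  have hNi : N G i = P G i + Q G i := rfl
  intro k
  induction k with
  | zero => intro e hk he; omega
  | succ k ih =>
    intro e hk he X Y
    -- one action step, to the post-configuration
    have hact : (Sys G).Tr
        ((2 : Fin 4), enc G (X ++ (U G i).take (P G i - e)) ++ sg G i e ::
          enc G ((Vr G i).drop (Q G i - (e - P G i)) ++ Y))
        ((3 : Fin 4), enc G (X ++ (U G i).take (P G i - (e+1))) ++ sg G i e ::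
          enc G ((Vr G i).drop (Q G i - (e + 1 - P G i)) ++ Y)) := by
      by_cases hP : e < P G i
      · refine tr_step G (Adel_mem G i ⟨e, hP⟩) rfl rfl ?_
        refine ⟨enc G (X ++ (U G i).take (P G i - (e+1))),
          enc G ((Vr G i).drop (Q G i - (e - P G i)) ++ Y), ?_, ?_⟩
        · have h1 : P G i - e = (P G i - 1 - e) + 1 := by omega
          have h2 : P G i - (e+1) = P G i - 1 - e := by omega
          have hlt' : P G i - 1 - e < ((U G i).map (Sum.inl : _ → Al G)).length := by
            simpa using show P G i - 1 - e < P G i by omega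
          rw [h1, h2]
          simp only [enc, List.map_append, List.map_take, List.append_assoc]
          rw [List.take_succ, List.getElem?_eq_getElem hlt']
          simp [List.append_assoc]
        · have hq : Q G i - (e + 1 - P G i) = Q G i - (e - P G i) := by omega
          rw [hq]
          simp [List.append_assoc]
      · have hfP : e - P G i < Q G i := by omega
        refine tr_step G (Ains_mem G i ⟨e - P G i, hfP⟩) rfl rfl ?_
        refine ⟨enc G (X ++ (U G i).take (P G i - e)),
          enc G ((Vr G i).drop (Q G i - (e - P G i)) ++ Y), ?_, ?_⟩
        · have : P G i + (e - P G i) = e := by omega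
          rw [this]
          simp [List.append_assoc]
        · have h1 : P G i + (e - P G i) = e := by omega
          have h2 : (U G i).take (P G i - (e+1)) = (U G i).take (P G i - e) := by
            rw [show P G i - (e+1) = 0 by omega, show P G i - e = 0 by omega]
          have h3 : (Vr G i).drop (Q G i - (e + 1 - P G i))
              = (Vr G i).get ⟨Q G i - 1 - (e - P G i),
                  show Q G i - 1 - (e - P G i) < Q G i by omega⟩ ::
                (Vr G i).drop (Q G i - (e - P G i)) := by
            rw [show Q G i - (e + 1 - P G i) = Q G i - 1 - (e - P G i) by omega,
              List.drop_eq_getElem_cons (show Q G i - 1 - (e - P G i) < Q G i by omega),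
              show Q G i - 1 - (e - P G i) + 1 = Q G i - (e - P G i) by omega]
            rfl
          rw [h1, h2, h3]
          simp [enc, List.append_assoc]
    by_cases hNe : e + 1 < N G i
    · -- swap to the next stage and recurse
      refine (Relation.ReflTransGen.head hact ?_)
      have hs1 : (Sys G).Tr
          ((3 : Fin 4), enc G (X ++ (U G i).take (P G i - (e+1))) ++ sg G i e ::
            enc G ((Vr G i).drop (Q G i - (e + 1 - P G i)) ++ Y))
          ((0 : Fin 4), enc G (X ++ (U G i).take (P G i - (e+1))) ++ sg G i e :: sg G i (e+1) ::
            enc G ((Vr G i).drop (Q G i - (e + 1 - P G i)) ++ Y)) := by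
        refine tr_step G (S1_mem G i e (by omega)) rfl rfl ?_
        exact ⟨enc G (X ++ (U G i).take (P G i - (e+1))),
          enc G ((Vr G i).drop (Q G i - (e + 1 - P G i)) ++ Y), by simp, by simp⟩
      refine Relation.ReflTransGen.head hs1 ?_
      have hs2 : (Sys G).Tr
          ((0 : Fin 4), enc G (X ++ (U G i).take (P G i - (e+1))) ++ sg G i e :: sg G i (e+1) ::
            enc G ((Vr G i).drop (Q G i - (e + 1 - P G i)) ++ Y))
          ((2 : Fin 4), enc G (X ++ (U G i).take (P G i - (e+1))) ++ sg G i (e+1) ::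
            enc G ((Vr G i).drop (Q G i - (e + 1 - P G i)) ++ Y)) := by
        refine tr_step G (S2_mem G i e (by omega)) rfl rfl ?_
        exact ⟨enc G (X ++ (U G i).take (P G i - (e+1))),
          enc G ((Vr G i).drop (Q G i - (e + 1 - P G i)) ++ Y), by simp, by simp⟩
      refine Relation.ReflTransGen.head hs2 ?_
      exact ih (e+1) (by omega) hNe X Y
    · -- exit
      have heN : e + 1 = N G i := by omega
      refine Relation.ReflTransGen.head hact ?_
      have hx : (Sys G).Tr
          ((3 : Fin 4), enc G (X ++ (U G i).take (P G i - (e+1))) ++ sg G i e ::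
            enc G ((Vr G i).drop (Q G i - (e + 1 - P G i)) ++ Y))
          ((1 : Fin 4), enc G (X ++ Vr G i ++ Y)) := by
        have h1 : (U G i).take (P G i - (e+1)) = [] := by
          rw [show P G i - (e+1) = 0 by omega, List.take_zero]
        have h2 : (Vr G i).drop (Q G i - (e + 1 - P G i)) = Vr G i := by
          rw [show Q G i - (e + 1 - P G i) = 0 by omega, List.drop_zero]
        have h3 : N G i - 1 = e := by omega
        refine tr_step G (XR_mem G i) rfl rfl ?_
        rw [h1, h2, ← h3]
        exact ⟨enc G X, enc G (Vr G i ++ Y), by simp, by simp [enc, List.append_assoc]⟩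
      exact Relation.ReflTransGen.head hx Relation.ReflTransGen.refl

end Dir2

namespace Dir2

variable {T : Type} (G : Grammar T)

open InsDelRule

lemma sim_step [Finite T] {s s' : List (G.NT ⊕ T)} (h : G.Step s s') :
    Relation.ReflTransGen (Sys G).Tr
      ((0 : Fin 4), mk G :: enc G s) ((0 : Fin 4), mk G :: enc G s') := by
  obtain ⟨r, hrmem, x, y, hs, hs'⟩ := h
  obtain ⟨n, hget⟩ := List.mem_iff_get.mp hrmem
  have hU : U G n = r.1 := by rw [U, hget]
  have hV : Vr G n = r.2 := by rw [Vr, hget]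
  have hN0 : 0 < N G n := by
    have := P_pos G n
    show 0 < P G n + Q G n
    omega
  have step1 : (Sys G).Tr ((0 : Fin 4), mk G :: enc G s) ((1 : Fin 4), enc G s) :=
    tr_step G (J1_mem G) rfl rfl ⟨[], enc G s, by simp, by simp⟩
  have step2 : (Sys G).Tr ((1 : Fin 4), enc G s)
      ((0 : Fin 4), enc G (x ++ r.1) ++ mk G :: enc G y) :=
    tr_step G (J2_mem G) rfl rfl
      ⟨enc G (x ++ r.1), enc G y, by rw [hs]; simp [enc, List.append_assoc], by simp⟩
  have step3 : (Sys G).Tr ((0 : Fin 4), enc G (x ++ r.1) ++ mk G :: enc G y)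
      ((2 : Fin 4), enc G (x ++ r.1) ++ mk G :: sg G n 0 :: enc G y) :=
    tr_step G (E1_mem G n) rfl rfl ⟨enc G (x ++ r.1), enc G y, by simp, by simp⟩
  have step4 : (Sys G).Tr ((2 : Fin 4), enc G (x ++ r.1) ++ mk G :: sg G n 0 :: enc G y)
      ((2 : Fin 4), enc G (x ++ r.1) ++ sg G n 0 :: enc G y) :=
    tr_step G (E2_mem G n) rfl rfl ⟨enc G (x ++ r.1), enc G y, by simp, by simp⟩
  have hrun := run_from_pre G n (N G n) 0 rfl hN0 x y
  have hsh1 : enc G (x ++ (U G n).take (P G n - 0)) = enc G (x ++ r.1) := by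
    rw [Nat.sub_zero, List.take_length, hU]
  have hsh2 : enc G ((Vr G n).drop (Q G n - (0 - P G n)) ++ y) = enc G y := by
    rw [Nat.zero_sub, Nat.sub_zero, List.drop_length, List.nil_append]
  rw [hsh1, hsh2] at hrun
  have step5 : (Sys G).Tr ((1 : Fin 4), enc G (x ++ Vr G n ++ y))
      ((0 : Fin 4), mk G :: enc G s') :=
    tr_step G (J2_mem G) rfl rfl
      ⟨[], enc G s', by rw [hs', hV]; simp [enc, List.append_assoc], by simp⟩
  exact (Relation.ReflTransGen.head step1
    (Relation.ReflTransGen.head step2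
      (Relation.ReflTransGen.head step3
        (Relation.ReflTransGen.head step4
          (hrun.trans (Relation.ReflTransGen.head step5 Relation.ReflTransGen.refl))))))

lemma sim_derives [Finite T] {s s' : List (G.NT ⊕ T)} (h : G.Derives s s') :
    Relation.ReflTransGen (Sys G).Tr
      ((0 : Fin 4), mk G :: enc G s) ((0 : Fin 4), mk G :: enc G s') := by
  induction h with
  | refl => exact Relation.ReflTransGen.refl
  | tail _ hbc ih => exact ih.trans (sim_step G hbc)

lemma inv_rtg [Finite T] {c c' : Fin 4 × List (Al G)}
    (h : Relation.ReflTransGen (Sys G).Tr c c') (hI : Inv G c) : Inv G c' := by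
  induction h with
  | refl => exact hI
  | tail _ hbc ih => exact inv_preserved G ih hbc

lemma inv_comp1 : ∀ {c : Fin 4 × List (Al G)}, Inv G c → c.1 = (1 : Fin 4) →
    ∃ S, c.2 = enc G S ∧ D G S := by
  intro c h
  cases h with
  | null S hD => exact fun _ => ⟨S, rfl, hD⟩
  | stable X Y hD => exact fun hc => by simp at hc
  | entry i X Y hD => exact fun hc => by simp at hc
  | pre i e he X Y hD => exact fun hc => by simp at hc
  | post i e he X Y hD => exact fun hc => by simp at hc
  | swap i e he X Y hD => exact fun hc => by simp at hc

theorem lang_eq [Finite T] : (Sys G).lang = G.language := by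
  ext w
  constructor
  · rintro ⟨w0, hw0, hrt⟩
    have hw0' : w0 = [mk G, Sum.inl (Sum.inl G.start)] := by
      have : w0 ∈ [[mk G, Sum.inl (Sum.inl G.start)]] := hw0
      simpa using this
    subst hw0'
    have hI0 : Inv G ((0 : Fin 4), [mk G, Sum.inl (Sum.inl G.start)]) := by
      have := Inv.stable (G := G) [] [Sum.inl G.start] Relation.ReflTransGen.refl
      simpa [enc] using this
    have hIf := inv_rtg G hrt hI0
    obtain ⟨S, hSe, hSD⟩ := inv_comp1 G hIf rfl
    have hmaps : List.map (Sum.inl : _ → Al G) S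
        = List.map (Sum.inl : _ → Al G) (w.map Sum.inr) := by
      rw [show List.map (Sum.inl : _ → Al G) S = enc G S from rfl, ← hSe]
      show List.map (Sys G).emb w = _
      simp only [List.map_map]
      rfl
    have hS : S = w.map Sum.inr := List.map_injective_iff.mpr Sum.inl_injective hmaps
    rw [hS] at hSD
    exact hSD
  · intro hw
    have hsim := sim_derives G hw
    have stepf : (Sys G).Tr ((0 : Fin 4), mk G :: enc G (w.map Sum.inr))
        ((1 : Fin 4), enc G (w.map Sum.inr)) :=
      tr_step G (J1_mem G) rfl rfl ⟨[], enc G (w.map Sum.inr), by simp, by simp⟩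
    refine ⟨[mk G, Sum.inl (Sum.inl G.start)], List.mem_singleton.mpr rfl, ?_⟩
    have hemb : enc G (w.map Sum.inr) = w.map (Sys G).emb := by
      show _ = List.map (Sys G).emb w
      simp only [enc, List.map_map]
      rfl
    have h0 : mk G :: enc G [Sum.inl G.start] = [mk G, Sum.inl (Sum.inl G.start)] := by
      simp [enc]
    have hfull := (h0 ▸ hsim).trans (Relation.ReflTransGen.head stepf Relation.ReflTransGen.refl)
    rw [hemb] at hfull
    exact hfull

theorem grammar_lang_mem_GCL [Finite T] : G.language ∈ GCL T 4 1 1 0 1 0 1 :=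
  ⟨Al G, Sys G, le_refl 4, Sys_size G, lang_eq G⟩

end Dir2

namespace Dir1

open InsDelRule

variable {V T : Type} (M : GCID V T)

abbrev NTy : Type := (Fin M.k ⊕ V) ⊕ Bool
abbrev Sy : Type := NTy M ⊕ T

def code (a : V) : Sy M := Sum.inl (Sum.inl (Sum.inr a))
def cm (i : Fin M.k) : Sy M := Sum.inl (Sum.inl (Sum.inl i))
def S0 : Sy M := Sum.inl (Sum.inr true)
def Fm : Sy M := Sum.inl (Sum.inr false)
def tm (t : T) : Sy M := Sum.inr t
def cd : List V → List (Sy M) := List.map (code M)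

def ruleSrc : InsDelRule V → List V
  | .ins u _ v => u ++ v
  | .del u α v => u ++ α ++ v

def ruleTgt : InsDelRule V → List V
  | .ins u α v => u ++ α ++ v
  | .del u _ v => u ++ v

lemma applies_iff (r : InsDelRule V) (w w' : List V) :
    r.Applies w w' ↔ ∃ x y, w = x ++ ruleSrc r ++ y ∧ w' = x ++ ruleTgt r ++ y := by
  cases r <;> simp [InsDelRule.Applies, ruleSrc, ruleTgt, List.append_assoc]

noncomputable def univV : List V := by
  haveI := M.hV
  letI := Fintype.ofFinite V
  exact Finset.univ.toList

lemma mem_univV (a : V) : a ∈ univV M := by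
  simp [univV]

noncomputable def univT (T : Type) [Finite T] : List T :=
  letI := Fintype.ofFinite T
  Finset.univ.toList

lemma mem_univT [Finite T] (t : T) : t ∈ univT T := by
  simp [univT]

noncomputable def RulesG [Finite T] : List (List (Sy M) × List (Sy M)) :=
  M.axioms.map (fun w => ([S0 M], cm M M.i0 :: cd M w))
  ++ (List.finRange M.k).flatMap (fun i => (univV M).flatMap (fun a =>
      [([cm M i, code M a], [code M a, cm M i]),
       ([code M a, cm M i], [cm M i, code M a])]))
  ++ M.R.map (fun ρ => (cm M ρ.1 :: cd M (ruleSrc ρ.2.1), cm M ρ.2.2 :: cd M (ruleTgt ρ.2.1)))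
  ++ [([cm M M.ifin], [Fm M])]
  ++ (univT T).map (fun t => ([Fm M, code M (M.emb t)], [tm M t, Fm M]))
  ++ [([Fm M], ([] : List (Sy M)))]

lemma mem_RulesG_iff [Finite T] (r) : r ∈ RulesG M ↔
    (∃ w ∈ M.axioms, r = ([S0 M], cm M M.i0 :: cd M w)) ∨
    (∃ i a, r = ([cm M i, code M a], [code M a, cm M i]) ∨
            r = ([code M a, cm M i], [cm M i, code M a])) ∨
    (∃ ρ ∈ M.R, r = (cm M ρ.1 :: cd M (ruleSrc ρ.2.1), cm M ρ.2.2 :: cd M (ruleTgt ρ.2.1))) ∨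
    (r = ([cm M M.ifin], [Fm M])) ∨
    (∃ t, r = ([Fm M, code M (M.emb t)], [tm M t, Fm M])) ∨
    (r = ([Fm M], ([] : List (Sy M)))) := by
  simp only [RulesG, List.mem_append, List.mem_map, List.mem_flatMap, List.mem_finRange,
    List.mem_cons, List.not_mem_nil, or_false, List.mem_singleton, true_and]
  constructor
  · rintro (((((⟨w, hw, rfl⟩ | ⟨i, a, ha, (rfl | rfl)⟩) | ⟨ρ, hρ, rfl⟩) | rfl) |
      ⟨t, ht, rfl⟩) | rfl)
    · exact Or.inl ⟨w, hw, rfl⟩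
    · exact Or.inr (Or.inl ⟨i, a, Or.inl rfl⟩)
    · exact Or.inr (Or.inl ⟨i, a, Or.inr rfl⟩)
    · exact Or.inr (Or.inr (Or.inl ⟨ρ, hρ, rfl⟩))
    · exact Or.inr (Or.inr (Or.inr (Or.inl rfl)))
    · exact Or.inr (Or.inr (Or.inr (Or.inr (Or.inl ⟨t, rfl⟩))))
    · exact Or.inr (Or.inr (Or.inr (Or.inr (Or.inr rfl))))
  · rintro (⟨w, hw, rfl⟩ | ⟨i, a, (rfl | rfl)⟩ | ⟨ρ, hρ, rfl⟩ | rfl | ⟨t, rfl⟩ | rfl)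
    · exact Or.inl (Or.inl (Or.inl (Or.inl (Or.inl ⟨w, hw, rfl⟩))))
    · exact Or.inl (Or.inl (Or.inl (Or.inl (Or.inr ⟨i, a, mem_univV M a, Or.inl rfl⟩))))
    · exact Or.inl (Or.inl (Or.inl (Or.inl (Or.inr ⟨i, a, mem_univV M a, Or.inr rfl⟩))))
    · exact Or.inl (Or.inl (Or.inl (Or.inr ⟨ρ, hρ, rfl⟩)))
    · exact Or.inl (Or.inl (Or.inr rfl))
    · exact Or.inl (Or.inr ⟨t, mem_univT t, rfl⟩)
    · exact Or.inr rfl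

noncomputable def Gr [Finite T] : Grammar T where
  NT := NTy M
  hNT := by have := M.hV; infer_instance
  start := Sum.inr true
  rules := RulesG M
  lhs_nt := by
    intro r hr
    rcases (mem_RulesG_iff M r).mp hr with ⟨w, hw, rfl⟩ | ⟨i, a, (rfl | rfl)⟩ |
      ⟨ρ, hρ, rfl⟩ | rfl | ⟨t, rfl⟩ | rfl
    · exact ⟨Sum.inr true, by simp [S0]⟩
    · exact ⟨Sum.inl (Sum.inl i), by simp [cm]⟩
    · exact ⟨Sum.inl (Sum.inr a), by simp [code]⟩
    · exact ⟨Sum.inl (Sum.inl ρ.1), by simp [cm]⟩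
    · exact ⟨Sum.inl (Sum.inl M.ifin), by simp [cm]⟩
    · exact ⟨Sum.inr false, by simp [Fm]⟩
    · exact ⟨Sum.inr false, by simp [Fm]⟩

end Dir1

namespace Dir1

open InsDelRule

variable {V T : Type} (M : GCID V T)

def Reach (c : Fin M.k × List V) : Prop :=
  ∃ w0 ∈ M.axioms, Relation.ReflTransGen M.Tr (M.i0, w0) c

inductive InvG : List (Sy M) → Prop
  | start : InvG [S0 M]
  | run (i : Fin M.k) (x y : List V) (h : Reach M (i, x ++ y)) :
      InvG (cd M x ++ cm M i :: cd M y)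
  | fin1 (x : List V) (w₁ : List T) (y : List V)
      (h : Reach M (M.ifin, x ++ w₁.map M.emb ++ y)) :
      InvG (cd M x ++ w₁.map (tm M) ++ Fm M :: cd M y)
  | fin2 (x : List V) (w₁ : List T) (y : List V)
      (h : Reach M (M.ifin, x ++ w₁.map M.emb ++ y)) :
      InvG (cd M x ++ w₁.map (tm M) ++ cd M y)

lemma code_injective : Function.Injective (code M) := by
  intro a b h; simpa [code] using h

lemma cm_inj {i i'} (h : cm M i = cm M i') : i = i' := by simpa [cm] using h

lemma cm_ne_code (i a) : cm M i ≠ code M a := by simp [cm, code]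
lemma cm_ne_S0 (i) : cm M i ≠ S0 M := by simp [cm, S0]
lemma cm_ne_Fm (i) : cm M i ≠ Fm M := by simp [cm, Fm]
lemma cm_ne_tm (i t) : cm M i ≠ tm M t := by simp [cm, tm]
lemma Fm_ne_code (a) : Fm M ≠ code M a := by simp [Fm, code]
lemma Fm_ne_S0 : Fm M ≠ S0 M := by simp [Fm, S0]
lemma Fm_ne_tm (t) : Fm M ≠ tm M t := by simp [Fm, tm]
lemma S0_ne_code (a) : S0 M ≠ code M a := by simp [S0, code]
lemma S0_ne_tm (t) : S0 M ≠ tm M t := by simp [S0, tm]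

lemma mem_cd {z : Sy M} {x : List V} (h : z ∈ cd M x) : ∃ a, z = code M a := by
  simp only [cd, List.mem_map] at h
  obtain ⟨a, -, rfl⟩ := h; exact ⟨a, rfl⟩

lemma mem_tmmap {z : Sy M} {w₁ : List T} (h : z ∈ w₁.map (tm M)) : ∃ t, z = tm M t := by
  simp only [List.mem_map] at h
  obtain ⟨t, -, rfl⟩ := h; exact ⟨t, rfl⟩

lemma shape_run {z : Sy M} {i x y} (h : z ∈ cd M x ++ cm M i :: cd M y) :
    (∃ a, z = code M a) ∨ z = cm M i := by
  rcases List.mem_append.mp h with h | h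
  · exact Or.inl (mem_cd M h)
  · rcases List.mem_cons.mp h with h | h
    · exact Or.inr h
    · exact Or.inl (mem_cd M h)

lemma shape_fin1 {z : Sy M} {x : List V} {w₁ : List T} {y : List V}
    (h : z ∈ cd M x ++ w₁.map (tm M) ++ Fm M :: cd M y) :
    (∃ a, z = code M a) ∨ (∃ t, z = tm M t) ∨ z = Fm M := by
  rcases List.mem_append.mp h with h | h
  · rcases List.mem_append.mp h with h | h
    · exact Or.inl (mem_cd M h)
    · exact Or.inr (Or.inl (mem_tmmap M h))
  · rcases List.mem_cons.mp h with h | h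
    · exact Or.inr (Or.inr h)
    · exact Or.inl (mem_cd M h)

lemma shape_fin2 {z : Sy M} {x : List V} {w₁ : List T} {y : List V}
    (h : z ∈ cd M x ++ w₁.map (tm M) ++ cd M y) :
    (∃ a, z = code M a) ∨ (∃ t, z = tm M t) := by
  rcases List.mem_append.mp h with h | h
  · rcases List.mem_append.mp h with h | h
    · exact Or.inl (mem_cd M h)
    · exact Or.inr (mem_tmmap M h)
  · exact Or.inl (mem_cd M h)

lemma cm_not_mem_cd (i) (x : List V) : cm M i ∉ cd M x := fun h => by
  obtain ⟨a, ha⟩ := mem_cd M h; exact cm_ne_code M i a ha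

lemma Fm_not_mem_cd (x : List V) : Fm M ∉ cd M x := fun h => by
  obtain ⟨a, ha⟩ := mem_cd M h; exact Fm_ne_code M a ha

lemma Fm_not_mem_tmmap (w₁ : List T) : Fm M ∉ w₁.map (tm M) := fun h => by
  obtain ⟨t, ht⟩ := mem_tmmap M h; exact Fm_ne_tm M t ht

lemma cd_eq_cons {y : List V} {z : Sy M} {rest} (h : cd M y = z :: rest) :
    ∃ b y₂, y = b :: y₂ ∧ z = code M b ∧ rest = cd M y₂ := by
  cases y with
  | nil => simp [cd] at h
  | cons b y₂ =>
    simp only [cd, List.map_cons, List.cons.injEq] at h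
    exact ⟨b, y₂, rfl, h.1.symm, h.2.symm⟩

lemma cd_eq_append {y s : List V} {rest} (h : cd M y = cd M s ++ rest) :
    ∃ y₂, y = s ++ y₂ ∧ rest = cd M y₂ := by
  obtain ⟨y₁, y₂, rfl, h1, h2⟩ := List.map_eq_append_iff.mp h
  have : y₁ = s := List.map_injective_iff.mpr (code_injective M) h1
  subst this
  exact ⟨y₂, rfl, h2.symm⟩

lemma cd_eq_append_singleton {x : List V} {x' : List (Sy M)} {a : V}
    (h : cd M x = x' ++ [code M a]) : ∃ x₂, x = x₂ ++ [a] ∧ x' = cd M x₂ := by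
  obtain ⟨x₁, x₂, rfl, h1, h2⟩ := List.map_eq_append_iff.mp h
  match x₂, h2 with
  | [b], h2 =>
    simp only [cd, List.map_cons, List.map_nil, List.cons.injEq] at h2
    obtain ⟨hb, -⟩ := h2
    have : b = a := code_injective M hb
    subst this
    exact ⟨x₁, rfl, h1.symm⟩

lemma singleton_eq_append {α : Type*} {a : α} {x l y : List α} (hl : l ≠ [])
    (h : [a] = x ++ l ++ y) : x = [] ∧ l = [a] ∧ y = [] := by
  have hlen := congrArg List.length h
  simp only [List.length_singleton, List.length_append] at hlen
  have hlp : 1 ≤ l.length := List.length_pos_iff.mpr hl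
  have h1 : x.length = 0 := by omega
  have h2 : y.length = 0 := by omega
  rw [List.length_eq_zero_iff] at h1 h2
  subst h1; subst h2
  simp only [List.nil_append, List.append_nil] at h
  exact ⟨rfl, h.symm, rfl⟩

end Dir1

namespace Dir1

open InsDelRule

variable {V T : Type} (M : GCID V T)

theorem invG_preserved [Finite T] {u v : List (Sy M)} (hI : InvG M u)
    (hS : (Gr M).Step u v) : InvG M v := by
  have hS' : ∃ r ∈ RulesG M, ∃ x y : List (Sy M), u = x ++ r.1 ++ y ∧ v = x ++ r.2 ++ y := hS
  obtain ⟨r, hr, x', y', hu, hv⟩ := hS'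
  rcases (mem_RulesG_iff M r).mp hr with ⟨w0, hw0, rfl⟩ | ⟨i', a, (rfl | rfl)⟩ |
    ⟨ρ, hρ, rfl⟩ | rfl | ⟨t, rfl⟩ | rfl
  · -- start rule
    cases hI with
    | start =>
      obtain ⟨rfl, -, rfl⟩ := singleton_eq_append (by simp) hu
      rw [hv]
      have := InvG.run (M := M) M.i0 [] w0 ⟨w0, hw0, Relation.ReflTransGen.refl⟩
      simpa [cd] using this
    | run i x y h =>
      have hm : S0 M ∈ cd M x ++ cm M i :: cd M y := by rw [hu]; simp
      rcases shape_run M hm with ⟨b, hb⟩ | hb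
      · exact absurd hb (S0_ne_code M b)
      · exact absurd hb.symm (cm_ne_S0 M i)
    | fin1 x w₁ y h =>
      have hm : S0 M ∈ cd M x ++ w₁.map (tm M) ++ Fm M :: cd M y := by rw [hu]; simp
      rcases shape_fin1 M hm with ⟨b, hb⟩ | ⟨t, hb⟩ | hb
      · exact absurd hb (S0_ne_code M b)
      · exact absurd hb (S0_ne_tm M t)
      · exact absurd hb.symm (Fm_ne_S0 M)
    | fin2 x w₁ y h =>
      have hm : S0 M ∈ cd M x ++ w₁.map (tm M) ++ cd M y := by rw [hu]; simp
      rcases shape_fin2 M hm with ⟨b, hb⟩ | ⟨t, hb⟩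
      · exact absurd hb (S0_ne_code M b)
      · exact absurd hb (S0_ne_tm M t)
  · -- mv1
    cases hI with
    | start =>
      obtain ⟨-, hl, -⟩ := singleton_eq_append (by simp) hu
      simp [cm, S0] at hl
    | run i x y h =>
      have hm : cm M i' ∈ cd M x ++ cm M i :: cd M y := by rw [hu]; simp
      rcases shape_run M hm with ⟨b, hb⟩ | hb
      · exact absurd hb (cm_ne_code M i' b)
      · have hii := cm_inj M hb
        subst hii
        have hu2 : cd M x ++ cm M i' :: cd M y = x' ++ cm M i' :: (code M a :: y') := by
          simpa using hu
        obtain ⟨hx, hy⟩ := unique_align (cm_not_mem_cd M i' x) (cm_not_mem_cd M i' y) hu2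
        obtain ⟨b, y₂, rfl, hb2, hy2⟩ := cd_eq_cons M hy
        obtain rfl := code_injective M hb2.symm
        rw [hv, ← hx, hy2]
        have := InvG.run (M := M) i' (x ++ [b]) y₂ (by simpa using h)
        simpa [cd, List.append_assoc] using this
    | fin1 x w₁ y h =>
      have hm : cm M i' ∈ cd M x ++ w₁.map (tm M) ++ Fm M :: cd M y := by rw [hu]; simp
      rcases shape_fin1 M hm with ⟨b, hb⟩ | ⟨t, hb⟩ | hb
      · exact absurd hb (cm_ne_code M i' b)
      · exact absurd hb (cm_ne_tm M i' t)
      · exact absurd hb (cm_ne_Fm M i')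
    | fin2 x w₁ y h =>
      have hm : cm M i' ∈ cd M x ++ w₁.map (tm M) ++ cd M y := by rw [hu]; simp
      rcases shape_fin2 M hm with ⟨b, hb⟩ | ⟨t, hb⟩
      · exact absurd hb (cm_ne_code M i' b)
      · exact absurd hb (cm_ne_tm M i' t)
  · -- mv2
    cases hI with
    | start =>
      obtain ⟨-, hl, -⟩ := singleton_eq_append (by simp) hu
      have := congrArg List.length hl
      simp at this
    | run i x y h =>
      have hm : cm M i' ∈ cd M x ++ cm M i :: cd M y := by rw [hu]; simp
      rcases shape_run M hm with ⟨b, hb⟩ | hb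
      · exact absurd hb (cm_ne_code M i' b)
      · have hii := cm_inj M hb
        subst hii
        have hu2 : cd M x ++ cm M i' :: cd M y = (x' ++ [code M a]) ++ cm M i' :: y' := by
          simpa [List.append_assoc] using hu
        obtain ⟨hx, hy⟩ := unique_align (cm_not_mem_cd M i' x) (cm_not_mem_cd M i' y) hu2
        obtain ⟨x₂, rfl, hx2⟩ := cd_eq_append_singleton M hx
        rw [hv, hx2, ← hy]
        have := InvG.run (M := M) i' x₂ (a :: y) (by simpa using h)
        simpa [cd, List.append_assoc] using this
    | fin1 x w₁ y h =>
      have hm : cm M i' ∈ cd M x ++ w₁.map (tm M) ++ Fm M :: cd M y := by rw [hu]; simp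
      rcases shape_fin1 M hm with ⟨b, hb⟩ | ⟨t, hb⟩ | hb
      · exact absurd hb (cm_ne_code M i' b)
      · exact absurd hb (cm_ne_tm M i' t)
      · exact absurd hb (cm_ne_Fm M i')
    | fin2 x w₁ y h =>
      have hm : cm M i' ∈ cd M x ++ w₁.map (tm M) ++ cd M y := by rw [hu]; simp
      rcases shape_fin2 M hm with ⟨b, hb⟩ | ⟨t, hb⟩
      · exact absurd hb (cm_ne_code M i' b)
      · exact absurd hb (cm_ne_tm M i' t)
  · -- sim
    cases hI with
    | start =>
      obtain ⟨-, hl, -⟩ := singleton_eq_append (by simp) hu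
      have : cm M ρ.1 = S0 M := by
        have := congrArg (fun l => l.head?) hl
        simpa using this
      exact absurd this (cm_ne_S0 M ρ.1)
    | run i x y h =>
      have hm : cm M ρ.1 ∈ cd M x ++ cm M i :: cd M y := by rw [hu]; simp
      rcases shape_run M hm with ⟨b, hb⟩ | hb
      · exact absurd hb (cm_ne_code M ρ.1 b)
      · have hii := cm_inj M hb
        subst hii
        have hu2 : cd M x ++ cm M ρ.1 :: cd M y
            = x' ++ cm M ρ.1 :: (cd M (ruleSrc ρ.2.1) ++ y') := by
          simpa [List.append_assoc] using hu
        obtain ⟨hx, hy⟩ := unique_align (cm_not_mem_cd M ρ.1 x) (cm_not_mem_cd M ρ.1 y) hu2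
        obtain ⟨y₂, rfl, hy2⟩ := cd_eq_append M hy
        obtain ⟨w0, hw0, hrt⟩ := h
        have htr : M.Tr (ρ.1, x ++ (ruleSrc ρ.2.1 ++ y₂)) (ρ.2.2, x ++ (ruleTgt ρ.2.1 ++ y₂)) :=
          ⟨ρ, hρ, rfl, rfl, (applies_iff ρ.2.1 _ _).mpr
            ⟨x, y₂, by simp [List.append_assoc], by simp [List.append_assoc]⟩⟩
        rw [hv, ← hx, hy2]
        have := InvG.run (M := M) ρ.2.2 x (ruleTgt ρ.2.1 ++ y₂) ⟨w0, hw0, hrt.tail htr⟩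
        simpa [cd, List.append_assoc] using this
    | fin1 x w₁ y h =>
      have hm : cm M ρ.1 ∈ cd M x ++ w₁.map (tm M) ++ Fm M :: cd M y := by rw [hu]; simp
      rcases shape_fin1 M hm with ⟨b, hb⟩ | ⟨t, hb⟩ | hb
      · exact absurd hb (cm_ne_code M ρ.1 b)
      · exact absurd hb (cm_ne_tm M ρ.1 t)
      · exact absurd hb (cm_ne_Fm M ρ.1)
    | fin2 x w₁ y h =>
      have hm : cm M ρ.1 ∈ cd M x ++ w₁.map (tm M) ++ cd M y := by rw [hu]; simp
      rcases shape_fin2 M hm with ⟨b, hb⟩ | ⟨t, hb⟩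
      · exact absurd hb (cm_ne_code M ρ.1 b)
      · exact absurd hb (cm_ne_tm M ρ.1 t)
  · -- toF
    cases hI with
    | start =>
      obtain ⟨-, hl, -⟩ := singleton_eq_append (by simp) hu
      simp [cm, S0] at hl
    | run i x y h =>
      have hm : cm M M.ifin ∈ cd M x ++ cm M i :: cd M y := by rw [hu]; simp
      rcases shape_run M hm with ⟨b, hb⟩ | hb
      · exact absurd hb (cm_ne_code M _ b)
      · have hii := cm_inj M hb
        subst hii
        have hu2 : cd M x ++ cm M M.ifin :: cd M y = x' ++ cm M M.ifin :: y' := by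
          simpa using hu
        obtain ⟨hx, hy⟩ := unique_align (cm_not_mem_cd M _ x) (cm_not_mem_cd M _ y) hu2
        rw [hv, ← hx, ← hy]
        have := InvG.fin1 (M := M) x [] y (by simpa using h)
        simpa using this
    | fin1 x w₁ y h =>
      have hm : cm M M.ifin ∈ cd M x ++ w₁.map (tm M) ++ Fm M :: cd M y := by rw [hu]; simp
      rcases shape_fin1 M hm with ⟨b, hb⟩ | ⟨t, hb⟩ | hb
      · exact absurd hb (cm_ne_code M _ b)
      · exact absurd hb (cm_ne_tm M _ t)
      · exact absurd hb (cm_ne_Fm M _)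
    | fin2 x w₁ y h =>
      have hm : cm M M.ifin ∈ cd M x ++ w₁.map (tm M) ++ cd M y := by rw [hu]; simp
      rcases shape_fin2 M hm with ⟨b, hb⟩ | ⟨t, hb⟩
      · exact absurd hb (cm_ne_code M _ b)
      · exact absurd hb (cm_ne_tm M _ t)
  · -- conv
    cases hI with
    | start =>
      obtain ⟨-, hl, -⟩ := singleton_eq_append (by simp) hu
      have := congrArg List.length hl
      simp at this
    | run i x y h =>
      have hm : Fm M ∈ cd M x ++ cm M i :: cd M y := by rw [hu]; simp
      rcases shape_run M hm with ⟨b, hb⟩ | hb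
      · exact absurd hb (Fm_ne_code M b)
      · exact absurd hb.symm (cm_ne_Fm M i)
    | fin1 x w₁ y h =>
      have hu2 : (cd M x ++ w₁.map (tm M)) ++ Fm M :: cd M y
          = x' ++ Fm M :: (code M (M.emb t) :: y') := by
        simpa [List.append_assoc] using hu
      obtain ⟨hx, hy⟩ := unique_align
        (by intro hc
            rcases List.mem_append.mp hc with hc | hc
            · exact Fm_not_mem_cd M x hc
            · exact Fm_not_mem_tmmap M w₁ hc)
        (Fm_not_mem_cd M y) hu2
      obtain ⟨b, y₂, rfl, hb2, hy2⟩ := cd_eq_cons M hy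
      obtain rfl := code_injective M hb2.symm
      rw [hv, ← hx, hy2]
      have := InvG.fin1 (M := M) x (w₁ ++ [t]) y₂
        (by simpa [List.append_assoc] using h)
      simpa [List.append_assoc] using this
    | fin2 x w₁ y h =>
      have hm : Fm M ∈ cd M x ++ w₁.map (tm M) ++ cd M y := by rw [hu]; simp
      rcases shape_fin2 M hm with ⟨b, hb⟩ | ⟨t', hb⟩
      · exact absurd hb (Fm_ne_code M b)
      · exact absurd hb (Fm_ne_tm M t')
  · -- fd
    cases hI with
    | start =>
      obtain ⟨-, hl, -⟩ := singleton_eq_append (by simp) hu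
      simp [Fm, S0] at hl
    | run i x y h =>
      have hm : Fm M ∈ cd M x ++ cm M i :: cd M y := by rw [hu]; simp
      rcases shape_run M hm with ⟨b, hb⟩ | hb
      · exact absurd hb (Fm_ne_code M b)
      · exact absurd hb.symm (cm_ne_Fm M i)
    | fin1 x w₁ y h =>
      have hu2 : (cd M x ++ w₁.map (tm M)) ++ Fm M :: cd M y = x' ++ Fm M :: y' := by
        simpa [List.append_assoc] using hu
      obtain ⟨hx, hy⟩ := unique_align
        (by intro hc
            rcases List.mem_append.mp hc with hc | hc
            · exact Fm_not_mem_cd M x hc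
            · exact Fm_not_mem_tmmap M w₁ hc)
        (Fm_not_mem_cd M y) hu2
      rw [hv, ← hx, ← hy]
      have := InvG.fin2 (M := M) x w₁ y h
      simpa [List.append_assoc] using this
    | fin2 x w₁ y h =>
      have hm : Fm M ∈ cd M x ++ w₁.map (tm M) ++ cd M y := by rw [hu]; simp
      rcases shape_fin2 M hm with ⟨b, hb⟩ | ⟨t', hb⟩
      · exact absurd hb (Fm_ne_code M b)
      · exact absurd hb (Fm_ne_tm M t')

end Dir1

namespace Dir1

open InsDelRule

variable {V T : Type} (M : GCID V T)

lemma mv1_mem [Finite T] (i a) :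
    ([cm M i, code M a], [code M a, cm M i]) ∈ RulesG M :=
  (mem_RulesG_iff M _).mpr (Or.inr (Or.inl ⟨i, a, Or.inl rfl⟩))

lemma mv2_mem [Finite T] (i a) :
    ([code M a, cm M i], [cm M i, code M a]) ∈ RulesG M :=
  (mem_RulesG_iff M _).mpr (Or.inr (Or.inl ⟨i, a, Or.inr rfl⟩))

lemma moveR [Finite T] (i : Fin M.k) : ∀ (x : List V) (p rest : List (Sy M)),
    Relation.ReflTransGen (Gr M).Step (p ++ (cm M i :: (cd M x ++ rest)))
      (p ++ (cd M x ++ (cm M i :: rest))) := by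
  intro x
  induction x with
  | nil =>
    intro p rest
    simp only [cd, List.map_nil, List.nil_append]
    exact Relation.ReflTransGen.refl
  | cons a x ih =>
    intro p rest
    have hstep : (Gr M).Step (p ++ (cm M i :: (cd M (a :: x) ++ rest)))
        ((p ++ [code M a]) ++ (cm M i :: (cd M x ++ rest))) :=
      ⟨_, mv1_mem M i a, p, cd M x ++ rest, by unfold Gr; simp [cd], by unfold Gr; simp [cd]⟩
    have := Relation.ReflTransGen.head hstep (ih (p ++ [code M a]) rest)
    simp [cd, List.append_assoc] at this ⊢; exact this

lemma moveL [Finite T] (i : Fin M.k) : ∀ (x : List V) (p rest : List (Sy M)),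
    Relation.ReflTransGen (Gr M).Step (p ++ (cd M x ++ (cm M i :: rest)))
      (p ++ (cm M i :: (cd M x ++ rest))) := by
  intro x
  induction x with
  | nil =>
    intro p rest
    simp only [cd, List.map_nil, List.nil_append]
    exact Relation.ReflTransGen.refl
  | cons a x ih =>
    intro p rest
    have hstep : (Gr M).Step ((p ++ [code M a]) ++ (cm M i :: (cd M x ++ rest)))
        (p ++ (cm M i :: (cd M (a :: x) ++ rest))) :=
      ⟨_, mv2_mem M i a, p, cd M x ++ rest, by unfold Gr; simp [cd], by unfold Gr; simp [cd]⟩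
    have := Relation.ReflTransGen.tail (ih (p ++ [code M a]) rest) hstep
    simp [cd, List.append_assoc] at this ⊢; exact this

lemma cd_append (x y : List V) : cd M (x ++ y) = cd M x ++ cd M y := List.map_append

lemma sim_tr [Finite T] {c c' : Fin M.k × List V} (h : M.Tr c c') :
    Relation.ReflTransGen (Gr M).Step (cm M c.1 :: cd M c.2) (cm M c'.1 :: cd M c'.2) := by
  obtain ⟨ρ, hρ, h1, h2, hap⟩ := h
  obtain ⟨x, y, hw, hw'⟩ := (applies_iff ρ.2.1 _ _).mp hap
  have hmem : (cm M ρ.1 :: cd M (ruleSrc ρ.2.1), cm M ρ.2.2 :: cd M (ruleTgt ρ.2.1))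
      ∈ RulesG M := (mem_RulesG_iff M _).mpr (Or.inr (Or.inr (Or.inl ⟨ρ, hρ, rfl⟩)))
  have part1 := moveR M c.1 x [] (cd M (ruleSrc ρ.2.1) ++ cd M y)
  have part2 : (Gr M).Step (cd M x ++ (cm M c.1 :: (cd M (ruleSrc ρ.2.1) ++ cd M y)))
      (cd M x ++ (cm M ρ.2.2 :: (cd M (ruleTgt ρ.2.1) ++ cd M y))) := by
    rw [← h1]
    exact ⟨_, hmem, cd M x, cd M y, by unfold Gr; simp [List.append_assoc], by unfold Gr; simp [List.append_assoc]⟩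
  have part3 := moveL M ρ.2.2 x [] (cd M (ruleTgt ρ.2.1) ++ cd M y)
  have hcd : cd M c.2 = cd M x ++ (cd M (ruleSrc ρ.2.1) ++ cd M y) := by
    rw [hw]; simp [cd, List.append_assoc]
  have hcd' : cd M c'.2 = cd M x ++ (cd M (ruleTgt ρ.2.1) ++ cd M y) := by
    rw [hw']; simp [cd, List.append_assoc]
  rw [hcd, hcd', ← h2]
  simp only [List.nil_append] at part1 part3
  exact (part1.trans (Relation.ReflTransGen.head part2 part3))

lemma sim_rtg [Finite T] {c c' : Fin M.k × List V}
    (h : Relation.ReflTransGen M.Tr c c') :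
    Relation.ReflTransGen (Gr M).Step (cm M c.1 :: cd M c.2) (cm M c'.1 :: cd M c'.2) := by
  induction h with
  | refl => exact Relation.ReflTransGen.refl
  | tail _ hbc ih => exact ih.trans (sim_tr M hbc)

lemma conv_loop [Finite T] : ∀ (w₂ w₁ : List T) (y : List V),
    Relation.ReflTransGen (Gr M).Step
      (w₁.map (tm M) ++ (Fm M :: cd M (w₂.map M.emb ++ y)))
      ((w₁ ++ w₂).map (tm M) ++ (Fm M :: cd M y)) := by
  intro w₂
  induction w₂ with
  | nil =>
    intro w₁ y
    simp only [List.map_nil, List.nil_append, List.append_nil]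
    exact Relation.ReflTransGen.refl
  | cons t w₂ ih =>
    intro w₁ y
    have hmem : ([Fm M, code M (M.emb t)], [tm M t, Fm M]) ∈ RulesG M :=
      (mem_RulesG_iff M _).mpr (Or.inr (Or.inr (Or.inr (Or.inr (Or.inl ⟨t, rfl⟩)))))
    have hstep : (Gr M).Step (w₁.map (tm M) ++ (Fm M :: cd M ((t :: w₂).map M.emb ++ y)))
        ((w₁ ++ [t]).map (tm M) ++ (Fm M :: cd M (w₂.map M.emb ++ y))) :=
      ⟨_, hmem, w₁.map (tm M), cd M (w₂.map M.emb ++ y), by unfold Gr; simp [cd], by unfold Gr; simp [cd]⟩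
    have := Relation.ReflTransGen.head hstep (ih (w₁ ++ [t]) y)
    simp [List.append_assoc] at this ⊢; exact this

lemma invG_rtg [Finite T] {u v : List (Sy M)} (h : (Gr M).Derives u v) (hI : InvG M u) :
    InvG M v := by
  induction h with
  | refl => exact hI
  | tail _ hbc ih => exact invG_preserved M ih hbc

lemma invG_terminal [Finite T] {s : List (Sy M)} (h : InvG M s) :
    ∀ {w : List T}, s = w.map Sum.inr → Reach M (M.ifin, w.map M.emb) := by
  cases h with
  | start =>
    intro w hw
    have : S0 M ∈ List.map Sum.inr w := hw ▸ (by simp)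
    obtain ⟨t, -, ht⟩ := List.mem_map.mp this
    exact absurd ht.symm (by simp [S0])
  | run i x y h =>
    intro w hw
    have : cm M i ∈ List.map Sum.inr w := hw ▸ (by simp)
    obtain ⟨t, -, ht⟩ := List.mem_map.mp this
    exact absurd ht.symm (by simp [cm])
  | fin1 x w₁ y h =>
    intro w hw
    have : Fm M ∈ List.map Sum.inr w := hw ▸ (by simp)
    obtain ⟨t, -, ht⟩ := List.mem_map.mp this
    exact absurd ht.symm (by simp [Fm])
  | fin2 x w₁ y h =>
    intro w hw
    have hx : x = [] := by
      cases x with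
      | nil => rfl
      | cons a x₂ =>
        have : code M a ∈ List.map Sum.inr w := hw ▸ (by simp [cd])
        obtain ⟨t, -, ht⟩ := List.mem_map.mp this
        exact absurd ht.symm (by simp [code])
    have hy : y = [] := by
      cases y with
      | nil => rfl
      | cons b y₂ =>
        have : code M b ∈ List.map Sum.inr w := hw ▸ (by simp [cd])
        obtain ⟨t, -, ht⟩ := List.mem_map.mp this
        exact absurd ht.symm (by simp [code])
    subst hx; subst hy
    simp only [cd, List.map_nil, List.nil_append, List.append_nil] at hw h
    have hww : w₁ = w := by
      have : List.map (tm M) w₁ = List.map (tm M) w := by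
        rw [hw]; rfl
      exact List.map_injective_iff.mpr (fun a b hab => by simpa [tm] using hab) this
    subst hww
    exact h

theorem lang_eqG [Finite T] : (Gr M).language = M.lang := by
  ext w
  constructor
  · intro hw
    have hInv := invG_rtg M hw InvG.start
    exact invG_terminal M hInv rfl
  · rintro ⟨w0, hw0, hrt⟩
    have hstart : (Gr M).Step [S0 M] (cm M M.i0 :: cd M w0) := by
      refine ⟨_, (mem_RulesG_iff M _).mpr (Or.inl ⟨w0, hw0, rfl⟩), [], [], by unfold Gr; simp, by unfold Gr; simp⟩
    have hsim := sim_rtg M hrt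
    have htoF : (Gr M).Step (cm M M.ifin :: cd M (w.map M.emb)) (Fm M :: cd M (w.map M.emb)) :=
      ⟨_, (mem_RulesG_iff M _).mpr (Or.inr (Or.inr (Or.inr (Or.inl rfl)))),
        [], cd M (w.map M.emb), by unfold Gr; simp, by unfold Gr; simp⟩
    have hconv := conv_loop M w [] []
    simp only [List.map_nil, List.nil_append, List.append_nil] at hconv
    have hfd : (Gr M).Step (w.map (tm M) ++ [Fm M]) (w.map (tm M)) := by
      refine ⟨_, (mem_RulesG_iff M _).mpr (Or.inr (Or.inr (Or.inr (Or.inr (Or.inr rfl))))),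
        w.map (tm M), [], by unfold Gr; simp, by unfold Gr; simp⟩
    have hall : (Gr M).Derives [S0 M] (w.map (tm M)) := by
      refine Relation.ReflTransGen.head hstart ?_
      refine (hsim.trans (Relation.ReflTransGen.head htoF ?_))
      have hconv' : Relation.ReflTransGen (Gr M).Step (Fm M :: cd M (w.map M.emb))
          (w.map (tm M) ++ [Fm M]) := by
        have : cd M (w.map M.emb ++ []) = cd M (w.map M.emb) := by simp
        exact hconv
      exact hconv'.tail hfd
    exact hall
end Dir1


/-- **Theorem 3.**  `GCL₄(ins₁^{1,0}, del₁^{0,1}) = RE`:  the family of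
languages generated by graph-controlled insertion-deletion systems with at
most 4 components, with insertion rules of size at most `(1,1,0)` and
deletion rules of size at most `(1,0,1)`, equals the family of recursively
enumerable languages. -/
theorem GCL4_ins110_del101_eq_RE (T : Type) [Finite T] :
    GCL T 4 1 1 0 1 0 1 = RE T := by
  ext L
  constructor
  · rintro ⟨V, M, hk, hsz, rfl⟩
    exact ⟨Dir1.Gr M, Dir1.lang_eqG M⟩
  · rintro ⟨G, rfl⟩
    exact Dir2.grammar_lang_mem_GCL G
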